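/- arXiv:1103.1057 — 2 statements merged into one kernel-verified Lean document; each statement's English description precedes it below -/
import Mathlib

section
/- Let H = (V, E) be a hypergraph with Bip H connected and fix any linear order on E. Then there is exactly one hypertree f of H with ῑ(f) = 0 (i.e., with respect to which every hyperedge is internally active), and exactly one hypertree f with ε̄(f) = 0 (every hyperedge externally active). Consequently, both the interior and the exterior polynomial of H have constant term 1. -/
open SimpleGraph Finset
open scoped Classical

noncomputable section

variable {α β : Type} [DecidableEq α] [DecidableEq β]

/-- A hypergraph: a finite set `V` of vertices, a finite (index) set `E` of hyperedges,
where the hyperedge indexed by `e ∈ E` is the nonempty set `incid e ⊆ V` of its vertices.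
(Indexing hyperedges by a type allows multiset multiplicities, as in the paper.) -/
structure Hypergraph' (α β : Type) where
  V : Finset α
  E : Finset β
  incid : β → Finset α
  incid_sub : ∀ e ∈ E, incid e ⊆ V
  incid_nonempty : ∀ e ∈ E, (incid e).Nonempty

/-- The degree (valence) of a vertex in a graph. -/
def degr {W : Type} (T : SimpleGraph W) (x : W) : ℕ := (T.neighborSet x).ncard

/-- Nullity (first Betti number) of a graph: #edges − #vertices + #components. -/
def nullity {W : Type} (G : SimpleGraph W) : ℕ :=
  G.edgeSet.ncard + Nat.card G.ConnectedComponent - Nat.card W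

/-- The result of transferring one unit of valence from `a` to `b`. -/
def transferFun (f : β → ℕ) (a b : β) : β → ℕ :=
  fun x => if x = a then f a - 1 else if x = b then f b + 1 else f x

namespace Hypergraph'

variable (H : Hypergraph' α β)

/-- The bipartite graph associated to a hypergraph: color classes `V` and `E`,
with `v` joined to `e` iff `v ∈ incid e`. -/
def Bip : SimpleGraph (↥H.V ⊕ ↥H.E) :=
  SimpleGraph.fromRel (fun x y =>
    ∃ (v : ↥H.V) (e : ↥H.E), x = Sum.inl v ∧ y = Sum.inr e ∧ (v : α) ∈ H.incid (e : β))

/-- A spanning tree of the associated bipartite graph. -/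
def IsSpanningTree (T : SimpleGraph (↥H.V ⊕ ↥H.E)) : Prop :=
  T ≤ H.Bip ∧ T.IsTree

/-- `T` is a spanning tree of `Bip H` realizing the vector `f` (a function on the
hyperedges, encoded as a function on `β` vanishing off `E`): `T` has degree
`f e + 1` at each hyperedge `e`. -/
def Realizes (T : SimpleGraph (↥H.V ⊕ ↥H.E)) (f : β → ℕ) : Prop :=
  H.IsSpanningTree T ∧ (∀ e, e ∉ H.E → f e = 0) ∧
    ∀ e : ↥H.E, degr T (Sum.inr e) = f (e : β) + 1

/-- A hypertree is a vector realized by some spanning tree of `Bip H`. -/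
def IsHypertree (f : β → ℕ) : Prop := ∃ T, H.Realizes T f

/-- The bipartite graph `Bip H |_{E'}` induced by a subset `E'` of hyperedges:
color classes `∪E'` and `E'`. -/
def BipOn (E' : Finset β) : SimpleGraph (↥(E'.biUnion H.incid) ⊕ ↥E') :=
  SimpleGraph.fromRel (fun x y =>
    ∃ (v : ↥(E'.biUnion H.incid)) (e : ↥E'),
      x = Sum.inl v ∧ y = Sum.inr e ∧ (v : α) ∈ H.incid (e : β))

/-- `c(E')`: the number of connected components of `Bip H |_{E'}`. -/
def compCount (E' : Finset β) : ℕ := Nat.card (H.BipOn E').ConnectedComponent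

/-- `μ(E') = |∪E'| − c(E')` (and `μ(∅) = 0`). -/
def mu (E' : Finset β) : ℤ :=
  ((E'.biUnion H.incid).card : ℤ) - (H.compCount E' : ℤ)

/-- `f` is such that a transfer of valence is possible from `a` to `b`. -/
def TransferPossible (f : β → ℕ) (a b : β) : Prop :=
  0 < f a ∧ H.IsHypertree (transferFun f a b)

/-- `e` is internally active w.r.t. the hypertree `f` and the order `o`. -/
def InternallyActive (o : LinearOrder β) (f : β → ℕ) (e : β) : Prop :=
  ∀ x ∈ H.E, o.lt x e → ¬ H.TransferPossible f e x

/-- `e` is externally active w.r.t. the hypertree `f` and the order `o`. -/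
def ExternallyActive (o : LinearOrder β) (f : β → ℕ) (e : β) : Prop :=
  ∀ x ∈ H.E, o.lt x e → ¬ H.TransferPossible f x e

/-- `ῑ(f)`: the number of internally inactive hyperedges w.r.t. `f`. -/
def intInact (o : LinearOrder β) (f : β → ℕ) : ℕ :=
  (H.E.filter (fun e => ¬ H.InternallyActive o f e)).card

/-- `ε̄(f)`: the number of externally inactive hyperedges w.r.t. `f`. -/
def extInact (o : LinearOrder β) (f : β → ℕ) : ℕ :=
  (H.E.filter (fun e => ¬ H.ExternallyActive o f e)).card

end Hypergraph'


set_option linter.unusedSectionVars false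

section AuxGraph

variable {W : Type} [Fintype W] [DecidableEq W]


lemma walk_closed {G : SimpleGraph W} (P : W → Prop)
    (hP : ∀ {u v}, G.Adj u v → P u → P v) {u v : W} (p : G.Walk u v) (h : P u) : P v := by
  induction p with
  | nil => exact h
  | cons hadj _ ih => exact ih (hP hadj h)

lemma reach_delete {G : SimpleGraph W} {a b u : W}
    (h : G.Reachable a u) :
    (G.deleteEdges {s(a,b)}).Reachable a u ∨ (G.deleteEdges {s(a,b)}).Reachable b u := by
  obtain ⟨p⟩ := h
  refine walk_closed
    (fun z => (G.deleteEdges {s(a,b)}).Reachable a z ∨ (G.deleteEdges {s(a,b)}).Reachable b z)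
    ?_ p (Or.inl (Reachable.refl a))
  intro x y hadj hx
  by_cases he : s(x,y) = s(a,b)
  · rw [Sym2.eq_iff] at he
    rcases he with ⟨rfl, rfl⟩ | ⟨rfl, rfl⟩
    · exact Or.inr (Reachable.refl _)
    · exact Or.inl (Reachable.refl _)
  · have : (G.deleteEdges {s(a,b)}).Adj x y := by
      simp [deleteEdges_adj, hadj, he]
    rcases hx with hx | hx
    · exact Or.inl (hx.trans this.reachable)
    · exact Or.inr (hx.trans this.reachable)

lemma delete_connected {G : SimpleGraph W} (hc : G.Connected) {a b : W}
    (h : (G.deleteEdges {s(a,b)}).Reachable a b) : (G.deleteEdges {s(a,b)}).Connected := by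
  have key : ∀ u, (G.deleteEdges {s(a,b)}).Reachable a u := by
    intro u
    rcases reach_delete (G := G) (b := b) (hc.preconnected a u) with h' | h'
    · exact h'
    · exact h.trans h'
  rw [connected_iff]
  exact ⟨fun u v => (key u).symm.trans (key v), hc.nonempty⟩

lemma neighbor_nonempty {G : SimpleGraph W} (hc : G.Connected) {u v : W} (huv : u ≠ v) :
    (G.neighborSet u).Nonempty := by
  obtain ⟨p⟩ := hc.preconnected u v
  cases p with
  | nil => exact absurd rfl huv
  | cons hadj _ => exact ⟨_, hadj⟩

lemma cross {G : SimpleGraph W} (P : W → Prop) {x w : W} (p : G.Walk x w)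
    (hw : ¬ P w) : P x →
    ∃ (a b : W) (q1 : G.Walk x a) (q2 : G.Walk b w),
      P a ∧ ¬ P b ∧ G.Adj a b ∧ p.edges = q1.edges ++ s(a,b) :: q2.edges := by
  induction p with
  | nil => exact fun hx => absurd hx hw
  | @cons x c w hadj q ih =>
    intro hx
    by_cases hc : P c
    · obtain ⟨a, b, q1, q2, ha, hb, hab, he⟩ := ih hw hc
      exact ⟨a, b, Walk.cons hadj q1, q2, ha, hb, hab, by simp [he]⟩
    · exact ⟨x, c, Walk.nil, q, hx, hc, hadj, by simp⟩

lemma degr_le (G : SimpleGraph W) (x : W) : degr G x ≤ Fintype.card W := by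
  have := Set.ncard_le_ncard (Set.subset_univ (G.neighborSet x)) Set.finite_univ
  simpa [degr, Set.ncard_univ, Nat.card_eq_fintype_card] using this

lemma nbhd_sup_edge_same (G : SimpleGraph W) {u w : W} (h : u ≠ w) :
    (G ⊔ fromEdgeSet {s(u,w)}).neighborSet u = insert w (G.neighborSet u) := by
  ext v
  simp only [mem_neighborSet, sup_adj, fromEdgeSet_adj, Set.mem_singleton_iff,
    Set.mem_insert_iff, Sym2.eq_iff]
  aesop

lemma nbhd_sup_edge_other (G : SimpleGraph W) {u w y : W} (hy1 : y ≠ u) (hy2 : y ≠ w) :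
    (G ⊔ fromEdgeSet {s(u,w)}).neighborSet y = G.neighborSet y := by
  ext v
  simp only [mem_neighborSet, sup_adj, fromEdgeSet_adj, Set.mem_singleton_iff, Sym2.eq_iff]
  aesop

lemma nbhd_del_edge_same (G : SimpleGraph W) {u w : W} :
    (G.deleteEdges {s(u,w)}).neighborSet u = G.neighborSet u \ {w} := by
  ext v
  simp only [mem_neighborSet, deleteEdges_adj, Set.mem_singleton_iff, Set.mem_diff,
    Sym2.eq_iff]
  constructor
  · rintro ⟨hv, he⟩
    exact ⟨hv, fun hvw => he (Or.inl ⟨trivial, hvw⟩)⟩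

  · rintro ⟨hv, hvw⟩
    refine ⟨hv, ?_⟩
    rintro (⟨-, rfl⟩ | ⟨rfl, rfl⟩)
    · exact hvw rfl
    · exact G.loopless.irrefl _ hv

lemma nbhd_del_edge_other (G : SimpleGraph W) {u w y : W} (hy1 : y ≠ u) (hy2 : y ≠ w) :
    (G.deleteEdges {s(u,w)}).neighborSet y = G.neighborSet y := by
  ext v
  simp only [mem_neighborSet, deleteEdges_adj, Set.mem_singleton_iff, Sym2.eq_iff]
  aesop


lemma spanning_tree_exists {G : SimpleGraph W} (hc : G.Connected) :
    ∃ T ≤ G, T.IsTree := by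
  classical
  set S : Set ℕ := {n | ∃ T ≤ G, T.Connected ∧ T.edgeSet.ncard = n} with hSdef
  have hS : S.Nonempty := ⟨_, G, le_refl _, hc, rfl⟩
  obtain ⟨T, hTG, hTc, hTcard⟩ := Nat.sInf_mem hS
  refine ⟨T, hTG, hTc, ?_⟩
  rw [isAcyclic_iff_forall_edge_isBridge]
  intro e he
  induction e with
  | _ a b =>
    rw [isBridge_iff]
    refine fun hreach => ?_
    have hconn : (T.deleteEdges {s(a,b)}).Connected := delete_connected hTc hreach
    have hlt : (T.deleteEdges {s(a,b)}).edgeSet.ncard < sInf S := by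
      rw [← hTcard, edgeSet_deleteEdges]
      exact Set.ncard_lt_ncard (Set.sdiff_singleton_ssubset.mpr he) (T.edgeSet.toFinite)
    have hmem : (T.deleteEdges {s(a,b)}).edgeSet.ncard ∈ S :=
      ⟨T.deleteEdges {s(a,b)}, le_trans (deleteEdges_le _) hTG, hconn, rfl⟩
    exact absurd (Nat.sInf_le hmem) (Nat.not_le.mpr hlt)

lemma tree_edge_ncard {T : SimpleGraph W} (h : T.IsTree) :
    T.edgeSet.ncard + 1 = Fintype.card W := by
  classical
  have h2 := h.card_edgeFinset
  have h3 : T.edgeSet.ncard = T.edgeFinset.card := by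
    rw [← SimpleGraph.coe_edgeFinset, Set.ncard_coe_finset]
  omega

lemma tree_of_connected_card {T : SimpleGraph W} (hc : T.Connected)
    (hcard : T.edgeSet.ncard + 1 = Fintype.card W) : T.IsTree := by
  obtain ⟨T₀, hT₀T, hT₀⟩ := spanning_tree_exists hc
  have hcard₀ := tree_edge_ncard hT₀
  have hsub : T₀.edgeSet ⊆ T.edgeSet := edgeSet_mono hT₀T
  have : T₀.edgeSet = T.edgeSet :=
    Set.eq_of_subset_of_ncard_le hsub (by omega) (T.edgeSet.toFinite)
  rwa [edgeSet_inj.mp this] at hT₀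

lemma degr_mod1_other (T : SimpleGraph W) {X w c d y : W} (hy : y ≠ X) (hy2 : y ≠ w)
    (hy3 : y ≠ c) (hy4 : y ≠ d) :
    degr ((T ⊔ fromEdgeSet {s(X,w)}).deleteEdges {s(c,d)}) y = degr T y := by
  unfold degr
  rw [nbhd_del_edge_other _ hy3 hy4, nbhd_sup_edge_other _ hy hy2]

lemma degr_mod1_X (T : SimpleGraph W) {X w c d : W} (hXw : ¬ T.Adj X w) (hne : X ≠ w)
    (h1 : X ≠ c) (h2 : X ≠ d) :
    degr ((T ⊔ fromEdgeSet {s(X,w)}).deleteEdges {s(c,d)}) X = degr T X + 1 := by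
  unfold degr
  rw [nbhd_del_edge_other _ h1 h2, nbhd_sup_edge_same _ hne,
    Set.ncard_insert_of_notMem (by simpa using hXw) (Set.toFinite _)]

lemma degr_mod1_c (T : SimpleGraph W) {X w c d : W} (hcd : T.Adj c d) (hc1 : c ≠ X)
    (hc2 : c ≠ w) :
    degr ((T ⊔ fromEdgeSet {s(X,w)}).deleteEdges {s(c,d)}) c + 1 = degr T c := by
  unfold degr
  rw [nbhd_del_edge_same, nbhd_sup_edge_other _ hc1 hc2,
    Set.ncard_diff_singleton_add_one (by simpa using hcd) (Set.toFinite _)]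

lemma degr_mod1_Xc (T : SimpleGraph W) {X w d : W} (hXw : ¬ T.Adj X w) (hXd : T.Adj X d)
    (hne : X ≠ w) :
    degr ((T ⊔ fromEdgeSet {s(X,w)}).deleteEdges {s(X,d)}) X = degr T X := by
  unfold degr
  have hwd : w ≠ d := by rintro rfl; exact hXw hXd
  rw [nbhd_del_edge_same, nbhd_sup_edge_same _ hne,
    Set.insert_diff_of_notMem _ (by simpa using hwd),
    Set.ncard_insert_of_notMem (by simp [hXw]) (Set.toFinite _),
    Set.ncard_diff_singleton_add_one (by simpa using hXd) (Set.toFinite _)]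

lemma degr_mod2_other (T' : SimpleGraph W) {X w c d y : W} (hy : y ≠ X) (hy2 : y ≠ w)
    (hy3 : y ≠ c) (hy4 : y ≠ d) :
    degr ((T'.deleteEdges {s(X,w)}) ⊔ fromEdgeSet {s(c,d)}) y = degr T' y := by
  unfold degr
  rw [nbhd_sup_edge_other _ hy3 hy4, nbhd_del_edge_other _ hy hy2]

lemma degr_mod2_X (T' : SimpleGraph W) {X w c d : W} (hXw : T'.Adj X w)
    (h1 : X ≠ c) (h2 : X ≠ d) :
    degr ((T'.deleteEdges {s(X,w)}) ⊔ fromEdgeSet {s(c,d)}) X + 1 = degr T' X := by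
  unfold degr
  rw [nbhd_sup_edge_other _ h1 h2, nbhd_del_edge_same,
    Set.ncard_diff_singleton_add_one (by simpa using hXw) (Set.toFinite _)]

lemma degr_mod2_c (T' : SimpleGraph W) {X w c d : W} (hcd : ¬ T'.Adj c d) (hc1 : c ≠ X)
    (hc2 : c ≠ w) (hcd' : c ≠ d) :
    degr ((T'.deleteEdges {s(X,w)}) ⊔ fromEdgeSet {s(c,d)}) c = degr T' c + 1 := by
  unfold degr
  rw [nbhd_sup_edge_same _ hcd', nbhd_del_edge_other _ hc1 hc2,
    Set.ncard_insert_of_notMem (by simpa using hcd) (Set.toFinite _)]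

end AuxGraph

namespace Hypergraph'

variable (H : Hypergraph' α β)

lemma bip_adj_shape {p q : ↥H.V ⊕ ↥H.E} (h : H.Bip.Adj p q) :
    (∃ (vv : ↥H.V) (ee : ↥H.E), p = Sum.inl vv ∧ q = Sum.inr ee ∧ (vv : α) ∈ H.incid (ee : β)) ∨
    (∃ (vv : ↥H.V) (ee : ↥H.E), q = Sum.inl vv ∧ p = Sum.inr ee ∧ (vv : α) ∈ H.incid (ee : β)) := by
  rw [Hypergraph'.Bip, fromRel_adj] at h
  rcases h with ⟨-, h | h⟩
  · exact Or.inl h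
  · exact Or.inr h

lemma exchange {u v : β → ℕ} (hu : H.IsHypertree u) (hv : H.IsHypertree v) {x : β}
    (hx : u x < v x) :
    ∃ b ∈ H.E, b ≠ x ∧ H.TransferPossible u b x ∧ H.TransferPossible v x b := by
  classical
  have hxE : x ∈ H.E := by
    by_contra hxE
    obtain ⟨T, hT⟩ := hu
    obtain ⟨T', hT'⟩ := hv
    rw [hT.2.1 x hxE, hT'.2.1 x hxE] at hx
    exact lt_irrefl _ hx
  suffices key : ∀ n : ℕ, ∀ T T' : SimpleGraph (↥H.V ⊕ ↥H.E), H.Realizes T u → H.Realizes T' v →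
      (T.edgeSet \ T'.edgeSet).ncard = n →
      ∃ b ∈ H.E, b ≠ x ∧ H.TransferPossible u b x ∧ H.TransferPossible v x b by
    obtain ⟨T, hT⟩ := hu
    obtain ⟨T', hT'⟩ := hv
    exact key _ T T' hT hT' rfl
  intro n
  induction n using Nat.strong_induction_on with
  | _ n ih =>
  intro T T' hT hT' hn
  set X : ↥H.V ⊕ ↥H.E := Sum.inr ⟨x, hxE⟩ with hXdef
  have hTbip := hT.1.1
  have hT'bip := hT'.1.1
  have hTtree := hT.1.2
  have hT'tree := hT'.1.2
  have dT : degr T X = u x + 1 := hT.2.2 ⟨x, hxE⟩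
  have dT' : degr T' X = v x + 1 := hT'.2.2 ⟨x, hxE⟩
  have hlt : (T.neighborSet X).ncard < (T'.neighborSet X).ncard := by
    have := dT; have := dT'; unfold degr at *; omega
  obtain ⟨w, hwB', hwT'⟩ := Set.exists_mem_notMem_of_ncard_lt_ncard hlt (Set.toFinite _)
  have hwB : T'.Adj X w := hwB'
  have hwT : ¬ T.Adj X w := hwT'
  have hXw : X ≠ w := hwB.ne
  have hεT' : s(X, w) ∈ T'.edgeSet := hwB
  have hεT : s(X, w) ∉ T.edgeSet := hwT
  -- the deleted edge is a bridge of T'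
  have hbr : ¬ (T'.deleteEdges {s(X, w)}).Reachable X w := by
    have hbridge : T'.IsBridge s(X, w) :=
      (isAcyclic_iff_forall_edge_isBridge.mp hT'tree.IsAcyclic) hεT'
    exact isBridge_iff.mp hbridge
  -- a path from X to w in T
  obtain ⟨p, hp⟩ := (hTtree.isConnected.preconnected X w).some.toPath
  -- first crossing edge
  obtain ⟨a, b, q1, q2, ha, hb, hab, hedges⟩ :=
    cross (fun z => (T'.deleteEdges {s(X, w)}).Reachable X z) p hbr (Reachable.refl X)
  have hε'T : s(a, b) ∈ T.edgeSet := hab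
  have hne' : s(a, b) ≠ s(X, w) := fun h => hεT (h ▸ hε'T)
  have hnodup : s(a, b) ∉ q1.edges ∧ s(a, b) ∉ q2.edges := by
    have hnd := hp.isTrail.edges_nodup
    rw [hedges] at hnd
    obtain ⟨hq1nd, hq2nd, hdisj⟩ := List.nodup_append.mp hnd
    exact ⟨fun hmem => hdisj _ hmem _ List.mem_cons_self rfl, (List.nodup_cons.mp hq2nd).1⟩
  have hε'T' : s(a, b) ∉ T'.edgeSet := by
    intro hmem
    have hadj : (T'.deleteEdges {s(X, w)}).Adj a b := by
      rw [deleteEdges_adj]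
      exact ⟨(mem_edgeSet _).mp hmem, by simpa using hne'⟩
    exact hb (ha.trans hadj.reachable)
  -- connectivity of T₂ = T + ε - ε'
  have hle1 : T.deleteEdges {s(a,b)} ≤ (T ⊔ fromEdgeSet {s(X,w)}).deleteEdges {s(a,b)} := by
    intro p' q' h'
    rw [deleteEdges_adj] at h' ⊢
    exact ⟨Or.inl h'.1, h'.2⟩
  have hq1r : (T.deleteEdges {s(a,b)}).Reachable X a :=
    ⟨q1.toDeleteEdges {s(a,b)} (by intro e he; simp only [Set.mem_singleton_iff]
                                   rintro rfl; exact hnodup.1 he)⟩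
  have hq2r : (T.deleteEdges {s(a,b)}).Reachable b w :=
    ⟨q2.toDeleteEdges {s(a,b)} (by intro e he; simp only [Set.mem_singleton_iff]
                                   rintro rfl; exact hnodup.2 he)⟩
  have hXwadj : ((T ⊔ fromEdgeSet {s(X,w)}).deleteEdges {s(a,b)}).Adj X w := by
    rw [deleteEdges_adj]
    refine ⟨Or.inr ?_, by simpa using (Ne.symm hne')⟩
    rw [fromEdgeSet_adj]
    exact ⟨rfl, hXw⟩
  have hreach_ab : (((T ⊔ fromEdgeSet {s(X,w)})).deleteEdges {s(a,b)}).Reachable a b :=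
    (hq1r.mono hle1).symm.trans (hXwadj.reachable.trans (hq2r.mono hle1).symm)
  have hconn₂ : ((T ⊔ fromEdgeSet {s(X,w)}).deleteEdges {s(a,b)}).Connected :=
    delete_connected (hTtree.isConnected.mono le_sup_left) hreach_ab
  -- edge set of T₂
  have hset₂ : ((T ⊔ fromEdgeSet {s(X,w)}).deleteEdges {s(a,b)}).edgeSet
      = insert s(X,w) (T.edgeSet \ {s(a,b)}) := by
    rw [edgeSet_deleteEdges, edgeSet_sup, edgeSet_fromEdgeSet]
    ext e
    simp only [Set.mem_diff, Set.mem_union, Set.mem_insert_iff, Set.mem_singleton_iff,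
      Set.mem_setOf_eq]
    constructor
    · rintro ⟨hL | ⟨rfl, -⟩, hR⟩
      · exact Or.inr ⟨hL, hR⟩
      · exact Or.inl rfl
    · rintro (rfl | ⟨hL, hR⟩)
      · exact ⟨Or.inr ⟨rfl, by change ¬ Sym2.IsDiag _; rw [Sym2.mk_isDiag_iff]; exact hXw⟩, Ne.symm hne'⟩
      · exact ⟨Or.inl hL, hR⟩
  have hcard₂ : ((T ⊔ fromEdgeSet {s(X,w)}).deleteEdges {s(a,b)}).edgeSet.ncard
      = T.edgeSet.ncard := by
    rw [hset₂, Set.ncard_insert_of_notMem (fun hc => hεT hc.1) (Set.toFinite _),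
      Set.ncard_diff_singleton_add_one ((mem_edgeSet _).mpr hab) (Set.toFinite _)]
  have htree₂ : ((T ⊔ fromEdgeSet {s(X,w)}).deleteEdges {s(a,b)}).IsTree := by
    refine tree_of_connected_card hconn₂ ?_
    rw [hcard₂]
    exact tree_edge_ncard hTtree
  have hbip₂ : (T ⊔ fromEdgeSet {s(X,w)}).deleteEdges {s(a,b)} ≤ H.Bip := by
    intro p' q' h'
    rw [deleteEdges_adj, sup_adj, fromEdgeSet_adj] at h'
    rcases h'.1 with h'' | ⟨heq, hne''⟩
    · exact hTbip h''
    · rw [Set.mem_singleton_iff, Sym2.eq_iff] at heq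
      rcases heq with ⟨rfl, rfl⟩ | ⟨rfl, rfl⟩
      · exact hT'bip hwB
      · exact (hT'bip hwB).symm
  -- connectivity of T₂' = T' - ε + ε'
  have hle2 : T'.deleteEdges {s(X,w)} ≤ (T'.deleteEdges {s(X,w)}) ⊔ fromEdgeSet {s(a,b)} :=
    le_sup_left
  have habadj : ((T'.deleteEdges {s(X,w)}) ⊔ fromEdgeSet {s(a,b)}).Adj a b := by
    rw [sup_adj, fromEdgeSet_adj]
    exact Or.inr ⟨rfl, hab.ne⟩
  have hclasses : ∀ z, (T'.deleteEdges {s(X,w)}).Reachable X z ∨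
      (T'.deleteEdges {s(X,w)}).Reachable w z :=
    fun z => reach_delete (hT'tree.isConnected.preconnected X z)
  have hXwreach : ((T'.deleteEdges {s(X,w)}) ⊔ fromEdgeSet {s(a,b)}).Reachable X w := by
    have hwb : (T'.deleteEdges {s(X,w)}).Reachable w b := (hclasses b).resolve_left hb
    exact ((ha.mono hle2).trans habadj.reachable).trans (hwb.mono hle2).symm
  have hconn₂' : ((T'.deleteEdges {s(X,w)}) ⊔ fromEdgeSet {s(a,b)}).Connected := by
    rw [connected_iff]
    refine ⟨?_, ⟨X⟩⟩
    have hXall : ∀ z, ((T'.deleteEdges {s(X,w)}) ⊔ fromEdgeSet {s(a,b)}).Reachable X z := by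
      intro z
      rcases hclasses z with h' | h'
      · exact h'.mono hle2
      · exact hXwreach.trans (h'.mono hle2)
    exact fun p' q' => (hXall p').symm.trans (hXall q')
  have hset₂' : ((T'.deleteEdges {s(X,w)}) ⊔ fromEdgeSet {s(a,b)}).edgeSet
      = insert s(a,b) (T'.edgeSet \ {s(X,w)}) := by
    rw [edgeSet_sup, edgeSet_deleteEdges, edgeSet_fromEdgeSet]
    ext e
    simp only [Set.mem_diff, Set.mem_union, Set.mem_insert_iff, Set.mem_singleton_iff,
      Set.mem_setOf_eq]
    constructor
    · rintro (⟨hL, hR⟩ | ⟨rfl, -⟩)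
      · exact Or.inr ⟨hL, hR⟩
      · exact Or.inl rfl
    · rintro (rfl | ⟨hL, hR⟩)
      · exact Or.inr ⟨rfl, by change ¬ Sym2.IsDiag _; rw [Sym2.mk_isDiag_iff]; exact hab.ne⟩
      · exact Or.inl ⟨hL, hR⟩
  have hcard₂' : ((T'.deleteEdges {s(X,w)}) ⊔ fromEdgeSet {s(a,b)}).edgeSet.ncard
      = T'.edgeSet.ncard := by
    rw [hset₂', Set.ncard_insert_of_notMem (fun hc => hε'T' hc.1) (Set.toFinite _),
      Set.ncard_diff_singleton_add_one hεT' (Set.toFinite _)]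
  have htree₂' : ((T'.deleteEdges {s(X,w)}) ⊔ fromEdgeSet {s(a,b)}).IsTree := by
    refine tree_of_connected_card hconn₂' ?_
    rw [hcard₂']
    exact tree_edge_ncard hT'tree
  have hbip₂' : (T'.deleteEdges {s(X,w)}) ⊔ fromEdgeSet {s(a,b)} ≤ H.Bip := by
    intro p' q' h'
    rw [sup_adj, fromEdgeSet_adj, deleteEdges_adj] at h'
    rcases h' with ⟨h'', -⟩ | ⟨heq, hne''⟩
    · exact hT'bip h''
    · rw [Set.mem_singleton_iff, Sym2.eq_iff] at heq
      rcases heq with ⟨rfl, rfl⟩ | ⟨rfl, rfl⟩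
      · exact hTbip hab
      · exact (hTbip hab).symm
  -- identify the endpoints of ε'
  obtain ⟨vv, ee, hε'eq⟩ : ∃ (vv : ↥H.V) (ee : ↥H.E), s(a,b) = s(Sum.inr ee, Sum.inl vv) := by
    rcases H.bip_adj_shape (hTbip hab) with ⟨vv, ee, hA, hB, -⟩ | ⟨vv, ee, hB, hA, -⟩
    · exact ⟨vv, ee, by rw [hA, hB, Sym2.eq_swap]⟩
    · exact ⟨vv, ee, by rw [hA, hB]⟩
  obtain ⟨wv, hwinl⟩ : ∃ wv : ↥H.V, w = Sum.inl wv := by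
    rcases H.bip_adj_shape (hT'bip hwB) with ⟨vv', ee', hA, hB, -⟩ | ⟨vv', ee', hB, hA, -⟩
    · exact absurd hA (by simp [hXdef])
    · exact ⟨vv', hB⟩
  have heeadj : T.Adj (Sum.inr ee) (Sum.inl vv) := by
    have : s(Sum.inr ee, Sum.inl vv) ∈ T.edgeSet := hε'eq ▸ hε'T
    exact (mem_edgeSet _).mp this
  have hee'adj : ¬ T'.Adj (Sum.inr ee) (Sum.inl vv) := by
    intro hc
    exact hε'T' (hε'eq ▸ ((mem_edgeSet _).mpr hc : s(Sum.inr ee, Sum.inl vv) ∈ T'.edgeSet))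
  rw [hε'eq] at htree₂ hbip₂ hset₂ htree₂' hbip₂'
  by_cases hcase : Sum.inr ee = X
  · -- recurse: T₂ realizes u with smaller symmetric difference
    have hreal₂ : H.Realizes ((T ⊔ fromEdgeSet {s(X,w)}).deleteEdges
        {s(Sum.inr ee, Sum.inl vv)}) u := by
      refine ⟨⟨hbip₂, htree₂⟩, hT.2.1, ?_⟩
      intro e'
      by_cases he' : (Sum.inr e' : ↥H.V ⊕ ↥H.E) = X
      · have he2 : e' = ⟨x, hxE⟩ := Sum.inr.inj he'
        subst he2
        rw [hcase, degr_mod1_Xc T hwT (hcase ▸ heeadj) hXw]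
        exact dT
      · have h1 : (Sum.inr e' : ↥H.V ⊕ ↥H.E) ≠ w := by rw [hwinl]; simp
        have h2 : (Sum.inr e' : ↥H.V ⊕ ↥H.E) ≠ Sum.inr ee := by rw [hcase]; exact he'
        have h3 : (Sum.inr e' : ↥H.V ⊕ ↥H.E) ≠ Sum.inl vv := by simp
        rw [degr_mod1_other T he' h1 h2 h3]
        exact hT.2.2 e'
    have hmeas : (((T ⊔ fromEdgeSet {s(X,w)}).deleteEdges
        {s(Sum.inr ee, Sum.inl vv)}).edgeSet \ T'.edgeSet).ncard < n := by
      have hsub2 : ((T ⊔ fromEdgeSet {s(X,w)}).deleteEdges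
          {s(Sum.inr ee, Sum.inl vv)}).edgeSet \ T'.edgeSet
          = (T.edgeSet \ T'.edgeSet) \ {s(Sum.inr ee, Sum.inl vv)} := by
        rw [hset₂]
        ext e
        simp only [Set.mem_diff, Set.mem_insert_iff, Set.mem_singleton_iff]
        constructor
        · rintro ⟨rfl | ⟨h1, h2⟩, h3⟩
          · exact absurd hεT' h3
          · exact ⟨⟨h1, h3⟩, h2⟩
        · rintro ⟨⟨h1, h3⟩, h2⟩
          exact ⟨Or.inr ⟨h1, h2⟩, h3⟩
      rw [hsub2, ← hn]
      refine Set.ncard_lt_ncard ?_ (Set.toFinite _)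
      refine Set.sdiff_singleton_ssubset.mpr ?_
      exact ⟨hε'eq ▸ hε'T, fun hc => hε'T' (hε'eq ▸ hc)⟩
    exact ih _ hmeas _ T' hreal₂ hT' rfl
  · -- produce the transfers
    have heene : (ee : β) ≠ x := by
      intro hc
      exact hcase (by rw [hXdef]; congr 1; exact Subtype.ext hc)
    have hXee : X ≠ Sum.inr ee := Ne.symm hcase
    have hXvv : X ≠ Sum.inl vv := by simp [hXdef]
    have heX : (Sum.inr ee : ↥H.V ⊕ ↥H.E) ≠ X := hcase
    have hew : (Sum.inr ee : ↥H.V ⊕ ↥H.E) ≠ w := by rw [hwinl]; simp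
    -- degrees of T₂
    have d₂X : degr ((T ⊔ fromEdgeSet {s(X,w)}).deleteEdges {s(Sum.inr ee, Sum.inl vv)}) X
        = u x + 2 := by
      rw [degr_mod1_X T hwT hXw hXee hXvv, dT]
    have d₂ee : degr ((T ⊔ fromEdgeSet {s(X,w)}).deleteEdges {s(Sum.inr ee, Sum.inl vv)})
        (Sum.inr ee) + 1 = u ee + 1 := by
      rw [degr_mod1_c T heeadj heX hew]
      exact hT.2.2 ee
    have hupos : 0 < u ee := by
      have hnon : (((T ⊔ fromEdgeSet {s(X,w)}).deleteEdges
          {s(Sum.inr ee, Sum.inl vv)}).neighborSet (Sum.inr ee)).Nonempty :=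
        neighbor_nonempty htree₂.isConnected heX
      have := (Set.ncard_pos (Set.toFinite _)).mpr hnon
      unfold degr at d₂ee
      omega
    have hreal₂ : H.Realizes ((T ⊔ fromEdgeSet {s(X,w)}).deleteEdges
        {s(Sum.inr ee, Sum.inl vv)}) (transferFun u ee x) := by
      refine ⟨⟨hbip₂, htree₂⟩, ?_, ?_⟩
      · intro e' he'
        unfold transferFun
        rw [if_neg (fun hc => he' (by rw [hc]; exact ee.2)), if_neg (fun hc => he' (by rw [hc]; exact hxE))]
        exact hT.2.1 e' he'
      · intro e'
        unfold transferFun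
        by_cases h1 : (e' : β) = (ee : β)
        · rw [if_pos h1]
          have : e' = ee := Subtype.ext h1
          subst this
          omega
        · rw [if_neg h1]
          by_cases h2 : (e' : β) = x
          · rw [if_pos h2]
            have : (Sum.inr e' : ↥H.V ⊕ ↥H.E) = X := by
              rw [hXdef]; congr 1; exact Subtype.ext h2
            rw [this, d₂X]
          · rw [if_neg h2]
            have hne1 : (Sum.inr e' : ↥H.V ⊕ ↥H.E) ≠ X := by
              rw [hXdef]; intro hc; exact h2 (congrArg Subtype.val (Sum.inr.inj hc))
            have hne2 : (Sum.inr e' : ↥H.V ⊕ ↥H.E) ≠ Sum.inr ee := by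
              intro hc; exact h1 (congrArg Subtype.val (Sum.inr.inj hc))
            have hne3 : (Sum.inr e' : ↥H.V ⊕ ↥H.E) ≠ w := by rw [hwinl]; simp
            have hne4 : (Sum.inr e' : ↥H.V ⊕ ↥H.E) ≠ Sum.inl vv := by simp
            rw [degr_mod1_other T hne1 hne3 hne2 hne4]
            exact hT.2.2 e'
    -- degrees of T₂'
    have hvpos : 0 < v x := by omega
    have d₂X' : degr ((T'.deleteEdges {s(X,w)}) ⊔ fromEdgeSet {s(Sum.inr ee, Sum.inl vv)}) X + 1
        = v x + 1 := by
      rw [degr_mod2_X T' hwB hXee hXvv]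
      exact dT'
    have d₂ee' : degr ((T'.deleteEdges {s(X,w)}) ⊔ fromEdgeSet {s(Sum.inr ee, Sum.inl vv)})
        (Sum.inr ee) = v ee + 2 := by
      rw [degr_mod2_c T' hee'adj heX hew (by simp), hT'.2.2 ee]
    have hreal₂' : H.Realizes ((T'.deleteEdges {s(X,w)}) ⊔
        fromEdgeSet {s(Sum.inr ee, Sum.inl vv)}) (transferFun v x ee) := by
      refine ⟨⟨hbip₂', htree₂'⟩, ?_, ?_⟩
      · intro e' he'
        unfold transferFun
        rw [if_neg (fun hc => he' (by rw [hc]; exact hxE)), if_neg (fun hc => he' (by rw [hc]; exact ee.2))]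
        exact hT'.2.1 e' he'
      · intro e'
        unfold transferFun
        by_cases h2 : (e' : β) = x
        · rw [if_pos h2]
          have : (Sum.inr e' : ↥H.V ⊕ ↥H.E) = X := by
            rw [hXdef]; congr 1; exact Subtype.ext h2
          rw [this]
          omega
        · rw [if_neg h2]
          by_cases h1 : (e' : β) = (ee : β)
          · rw [if_pos h1]
            have : e' = ee := Subtype.ext h1
            subst this
            rw [d₂ee']
          · rw [if_neg h1]
            have hne1 : (Sum.inr e' : ↥H.V ⊕ ↥H.E) ≠ X := by
              rw [hXdef]; intro hc; exact h2 (congrArg Subtype.val (Sum.inr.inj hc))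
            have hne2 : (Sum.inr e' : ↥H.V ⊕ ↥H.E) ≠ Sum.inr ee := by
              intro hc; exact h1 (congrArg Subtype.val (Sum.inr.inj hc))
            have hne3 : (Sum.inr e' : ↥H.V ⊕ ↥H.E) ≠ w := by rw [hwinl]; simp
            have hne4 : (Sum.inr e' : ↥H.V ⊕ ↥H.E) ≠ Sum.inl vv := by simp
            rw [degr_mod2_other T' hne1 hne3 hne2 hne4]
            exact hT'.2.2 e'
    exact ⟨ee, ee.2, heene, ⟨hupos, _, hreal₂⟩, ⟨hvpos, _, hreal₂'⟩⟩



lemma geo_lt (M : ℕ) : ∀ k : ℕ, M * ∑ j ∈ Finset.range k, (M+2)^j < (M+2)^k := by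
  intro k
  induction k with
  | zero => simp
  | succ k ihk =>
    rw [Finset.sum_range_succ, Nat.mul_add, pow_succ]
    nlinarith [pow_pos (by omega : 0 < M+2) k]





def HM : ℕ := Fintype.card (↥H.V ⊕ ↥H.E)

def rk (o : LinearOrder β) (e : β) : ℕ := (H.E.filter (fun y => o.lt e y)).card

def wgt (o : LinearOrder β) (e : β) : ℕ := (H.HM + 2)^(H.rk o e)

def weight (o : LinearOrder β) (f : β → ℕ) : ℕ := ∑ e ∈ H.E, f e * H.wgt o e

lemma ht_bound {f : β → ℕ} (hf : H.IsHypertree f) (e : β) : f e ≤ H.HM := by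
  obtain ⟨T, hT⟩ := hf
  by_cases he : e ∈ H.E
  · have h1 : degr T (Sum.inr (⟨e, he⟩ : ↥H.E)) = f e + 1 := hT.2.2 ⟨e, he⟩
    have h2 := degr_le T (Sum.inr (⟨e, he⟩ : ↥H.E))
    rw [HM]
    omega
  · rw [hT.2.1 e he]
    exact Nat.zero_le _

lemma ht_vanish {f : β → ℕ} (hf : H.IsHypertree f) {e : β} (he : e ∉ H.E) : f e = 0 := by
  obtain ⟨T, hT⟩ := hf
  exact hT.2.1 e he

lemma ht_finite : {f : β → ℕ | H.IsHypertree f}.Finite := by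
  classical
  have himg : ((fun (f : β → ℕ) (e : ↥H.E) => f ↑e) '' {f | H.IsHypertree f}).Finite := by
    refine Set.Finite.subset (Set.Finite.pi (fun _ : ↥H.E => Set.finite_Iic H.HM)) ?_
    rintro g ⟨f, hf, rfl⟩
    intro e _
    exact H.ht_bound hf ↑e
  refine Set.Finite.of_finite_image himg ?_
  intro f₁ h₁ f₂ h₂ heq
  funext e
  by_cases he : e ∈ H.E
  · exact congrFun heq ⟨e, he⟩
  · rw [H.ht_vanish h₁ he, H.ht_vanish h₂ he]

lemma rk_lt (o : LinearOrder β) {x y : β} (hy : y ∈ H.E) (hxy : o.lt x y) :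
    H.rk o y < H.rk o x := by
  letI := o
  rw [rk, rk]
  apply Finset.card_lt_card
  constructor
  · intro z hz
    rw [Finset.mem_filter] at hz ⊢
    exact ⟨hz.1, lt_trans hxy hz.2⟩
  · intro hsub
    have := hsub (Finset.mem_filter.mpr ⟨hy, hxy⟩)
    rw [Finset.mem_filter] at this
    exact lt_irrefl y this.2

lemma weight_lt (o : LinearOrder β) {f g : β → ℕ} (hfM : ∀ e, f e ≤ H.HM)
    {x : β} (hx : x ∈ H.E) (heq : ∀ y ∈ H.E, o.lt y x → f y = g y) (hlt : f x < g x) :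
    H.weight o f < H.weight o g := by
  classical
  letI := o
  set A := H.E.filter (fun y => y < x) with hA
  set B := H.E.filter (fun y => x < y) with hB
  have hxB : x ∉ B := by simp [hB]
  have hAB : Disjoint A (insert x B) := by
    rw [Finset.disjoint_left]
    intro z hzA hzB
    rw [hA, Finset.mem_filter] at hzA
    rcases Finset.mem_insert.mp hzB with rfl | hzB
    · exact lt_irrefl _ hzA.2
    · rw [hB, Finset.mem_filter] at hzB
      exact lt_asymm hzA.2 hzB.2
  have hEsplit : H.E = A ∪ insert x B := by
    ext z
    simp only [hA, hB, Finset.mem_union, Finset.mem_insert, Finset.mem_filter]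
    constructor
    · intro hz
      rcases lt_trichotomy z x with h | h | h
      · exact Or.inl ⟨hz, h⟩
      · exact Or.inr (Or.inl h)
      · exact Or.inr (Or.inr ⟨hz, h⟩)
    · rintro (⟨hz, -⟩ | rfl | ⟨hz, -⟩) <;> first | exact hz | exact hx
  have hsplit : ∀ h : β → ℕ, H.weight o h
      = ∑ e ∈ A, h e * H.wgt o e + (h x * H.wgt o x + ∑ e ∈ B, h e * H.wgt o e) := by
    intro h
    rw [weight, hEsplit, Finset.sum_union hAB, Finset.sum_insert hxB]
  have htail : ∑ e ∈ B, f e * H.wgt o e < H.wgt o x := by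
    have h1 : ∑ e ∈ B, f e * H.wgt o e ≤ ∑ e ∈ B, H.HM * H.wgt o e :=
      Finset.sum_le_sum (fun e _ => Nat.mul_le_mul_right _ (hfM e))
    have hinj : Set.InjOn (H.rk o) ↑B := by
      intro y1 h1' y2 h2' hcard
      by_contra hne
      have hy1 : y1 ∈ H.E := (Finset.mem_filter.mp h1').1
      have hy2 : y2 ∈ H.E := (Finset.mem_filter.mp h2').1
      rcases lt_or_gt_of_ne hne with hlt' | hlt'
      · exact absurd hcard (Nat.ne_of_gt (H.rk_lt o hy2 hlt'))
      · exact absurd hcard (Nat.ne_of_lt (H.rk_lt o hy1 hlt'))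
    have h2 : ∑ e ∈ B, H.wgt o e = ∑ j ∈ B.image (H.rk o), (H.HM + 2)^j := by
      rw [Finset.sum_image (fun y1 h1' y2 h2' => hinj h1' h2')]
      rfl
    have h3 : B.image (H.rk o) ⊆ Finset.range (H.rk o x) := by
      intro j hj
      obtain ⟨e, he, rfl⟩ := Finset.mem_image.mp hj
      rw [Finset.mem_range]
      rw [hB, Finset.mem_filter] at he
      exact H.rk_lt o he.1 he.2
    have h4 : ∑ j ∈ B.image (H.rk o), (H.HM + 2)^j ≤ ∑ j ∈ Finset.range (H.rk o x), (H.HM + 2)^j :=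
      Finset.sum_le_sum_of_subset h3
    have h5 := geo_lt H.HM (H.rk o x)
    have h6 : ∑ e ∈ B, H.HM * H.wgt o e = H.HM * ∑ e ∈ B, H.wgt o e := by
      rw [Finset.mul_sum]
    have h7 : H.wgt o x = (H.HM + 2)^(H.rk o x) := rfl
    rw [h6, h2] at h1
    rw [h7]
    calc ∑ e ∈ B, f e * H.wgt o e ≤ H.HM * ∑ j ∈ B.image (H.rk o), (H.HM + 2)^j := h1
      _ ≤ H.HM * ∑ j ∈ Finset.range (H.rk o x), (H.HM + 2)^j := Nat.mul_le_mul_left _ h4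
      _ < (H.HM + 2)^(H.rk o x) := h5
  have hfx : f x * H.wgt o x + H.wgt o x ≤ g x * H.wgt o x := by
    have h : (f x + 1) * H.wgt o x ≤ g x * H.wgt o x :=
      Nat.mul_le_mul_right _ (by omega)
    rw [Nat.add_mul, one_mul] at h
    exact h
  have hAeq : ∑ e ∈ A, f e * H.wgt o e = ∑ e ∈ A, g e * H.wgt o e := by
    refine Finset.sum_congr rfl (fun z hz => ?_)
    rw [hA, Finset.mem_filter] at hz
    rw [heq z hz.1 hz.2]
  rw [hsplit f, hsplit g, hAeq]
  have hstep : f x * H.wgt o x + ∑ e ∈ B, f e * H.wgt o e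
      < g x * H.wgt o x + ∑ e ∈ B, g e * H.wgt o e :=
    lt_of_lt_of_le (Nat.add_lt_add_left htail _) (le_trans hfx (Nat.le_add_right _ _))
  exact Nat.add_lt_add_left hstep _


lemma exists_hypertree (hconn : H.Bip.Connected) : ∃ f, H.IsHypertree f := by
  classical
  obtain ⟨T, hTB, hTtree⟩ := spanning_tree_exists hconn
  have hdeg : ∀ e : ↥H.E, 1 ≤ degr T (Sum.inr e) := by
    intro e
    obtain ⟨a, ha⟩ := H.incid_nonempty ↑e e.2
    have haV : a ∈ H.V := H.incid_sub ↑e e.2 ha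
    have hne : (Sum.inr e : ↥H.V ⊕ ↥H.E) ≠ Sum.inl ⟨a, haV⟩ := by simp
    exact (Set.ncard_pos (Set.toFinite _)).mpr (neighbor_nonempty hTtree.isConnected hne)
  refine ⟨fun e => if he : e ∈ H.E then degr T (Sum.inr ⟨e, he⟩) - 1 else 0,
    T, ⟨hTB, hTtree⟩, ?_, ?_⟩
  · intro e he
    dsimp only
    rw [dif_neg he]
  · intro e
    dsimp only
    rw [dif_pos e.2, Subtype.coe_eta]
    have := hdeg e
    omega


end Hypergraph'

/-- for any order there is a unique hypertree with respect to which
every hyperedge is internally active, and a unique one with every hyperedge externally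
active; hence both polynomials have constant term `1`. -/
theorem unique_fully_active (H : Hypergraph' α β) (hconn : H.Bip.Connected)
    (o : LinearOrder β) :
    (∃! f : β → ℕ, H.IsHypertree f ∧ H.intInact o f = 0) ∧
    (∃! f : β → ℕ, H.IsHypertree f ∧ H.extInact o f = 0) ∧
    {f : β → ℕ | H.IsHypertree f ∧ H.intInact o f = 0}.ncard = 1 ∧
    {f : β → ℕ | H.IsHypertree f ∧ H.extInact o f = 0}.ncard = 1 := by
  classical
  letI := o
  obtain ⟨f0, hf0⟩ := H.exists_hypertree hconn
  have hfin := H.ht_finite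
  have hS0 : f0 ∈ hfin.toFinset := hfin.mem_toFinset.mpr hf0
  obtain ⟨fmax, hfmaxS, hfmax⟩ := hfin.toFinset.exists_max_image (H.weight o) ⟨f0, hS0⟩
  obtain ⟨fmin, hfminS, hfmin⟩ := hfin.toFinset.exists_min_image (H.weight o) ⟨f0, hS0⟩
  have hfmaxH : H.IsHypertree fmax := hfin.mem_toFinset.mp hfmaxS
  have hfminH : H.IsHypertree fmin := hfin.mem_toFinset.mp hfminS
  -- every hyperedge is internally active w.r.t. fmax
  have hmax_act : ∀ e ∈ H.E, H.InternallyActive o fmax e := by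
    intro e he y hy hylt htr
    obtain ⟨hpos, hht⟩ := htr
    have hmem : transferFun fmax e y ∈ hfin.toFinset := hfin.mem_toFinset.mpr hht
    have hwlt : H.weight o fmax < H.weight o (transferFun fmax e y) := by
      refine H.weight_lt o (H.ht_bound hfmaxH) hy ?_ ?_
      · intro z hz hzy
        have h1 : z ≠ e := by
          intro hc
          subst hc
          exact absurd hylt (lt_asymm hzy)
        have h2 : z ≠ y := LT.lt.ne hzy
        simp [transferFun, h1, h2]
      · have h1 : y ≠ e := LT.lt.ne hylt
        simp [transferFun, h1]
    exact absurd (hfmax _ hmem) (Nat.not_le.mpr hwlt)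
  have hmax0 : H.intInact o fmax = 0 := by
    rw [Hypergraph'.intInact, Finset.card_eq_zero, Finset.filter_eq_empty_iff]
    exact fun e he => not_not_intro (hmax_act e he)
  -- every hyperedge is externally active w.r.t. fmin
  have hmin_act : ∀ e ∈ H.E, H.ExternallyActive o fmin e := by
    intro e he y hy hylt htr
    obtain ⟨hpos, hht⟩ := htr
    have hmem : transferFun fmin y e ∈ hfin.toFinset := hfin.mem_toFinset.mpr hht
    have hwlt : H.weight o (transferFun fmin y e) < H.weight o fmin := by
      refine H.weight_lt o (H.ht_bound hht) hy ?_ ?_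
      · intro z hz hzy
        have h1 : z ≠ e := by
          intro hc
          subst hc
          exact absurd hylt (lt_asymm hzy)
        have h2 : z ≠ y := LT.lt.ne hzy
        simp [transferFun, h1, h2]
      · simp [transferFun]
        omega
    exact absurd (hfmin _ hmem) (Nat.not_le.mpr hwlt)
  have hmin0 : H.extInact o fmin = 0 := by
    rw [Hypergraph'.extInact, Finset.card_eq_zero, Finset.filter_eq_empty_iff]
    exact fun e he => not_not_intro (hmin_act e he)
  -- uniqueness for the internal case
  have huniq_int : ∀ g, H.IsHypertree g → H.intInact o g = 0 → g = fmax := by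
    intro g hg hg0
    have hg_act : ∀ e ∈ H.E, H.InternallyActive o g e := by
      rw [Hypergraph'.intInact, Finset.card_eq_zero, Finset.filter_eq_empty_iff] at hg0
      exact fun e he => not_not.mp (hg0 he)
    by_contra hne
    have hdiff : ∃ y, g y ≠ fmax y := by
      by_contra h
      push_neg at h
      exact hne (funext h)
    set D := H.E.filter (fun y => g y ≠ fmax y) with hD
    have hDne : D.Nonempty := by
      obtain ⟨y, hy⟩ := hdiff
      have hyE : y ∈ H.E := by
        by_contra hyE
        rw [H.ht_vanish hg hyE, H.ht_vanish hfmaxH hyE] at hy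
        exact hy rfl
      exact ⟨y, Finset.mem_filter.mpr ⟨hyE, hy⟩⟩
    set x := D.min' hDne with hxdef
    have hxD := D.min'_mem hDne
    have hxE : x ∈ H.E := (Finset.mem_filter.mp hxD).1
    have hxne : g x ≠ fmax x := (Finset.mem_filter.mp hxD).2
    rcases lt_or_gt_of_ne hxne with hclt | hclt
    · obtain ⟨b, hbE, hbne, htr1, htr2⟩ := H.exchange hg hfmaxH hclt
      rcases lt_or_gt_of_ne hbne with hblt | hbgt
      · exact hmax_act x hxE b hbE hblt htr2
      · exact hg_act b hbE x hxE hbgt htr1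
    · obtain ⟨b, hbE, hbne, htr1, htr2⟩ := H.exchange hfmaxH hg hclt
      rcases lt_or_gt_of_ne hbne with hblt | hbgt
      · exact hg_act x hxE b hbE hblt htr2
      · exact hmax_act b hbE x hxE hbgt htr1
  -- uniqueness for the external case
  have huniq_ext : ∀ g, H.IsHypertree g → H.extInact o g = 0 → g = fmin := by
    intro g hg hg0
    have hg_act : ∀ e ∈ H.E, H.ExternallyActive o g e := by
      rw [Hypergraph'.extInact, Finset.card_eq_zero, Finset.filter_eq_empty_iff] at hg0
      exact fun e he => not_not.mp (hg0 he)
    by_contra hne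
    have hdiff : ∃ y, g y ≠ fmin y := by
      by_contra h
      push_neg at h
      exact hne (funext h)
    set D := H.E.filter (fun y => g y ≠ fmin y) with hD
    have hDne : D.Nonempty := by
      obtain ⟨y, hy⟩ := hdiff
      have hyE : y ∈ H.E := by
        by_contra hyE
        rw [H.ht_vanish hg hyE, H.ht_vanish hfminH hyE] at hy
        exact hy rfl
      exact ⟨y, Finset.mem_filter.mpr ⟨hyE, hy⟩⟩
    set x := D.min' hDne with hxdef
    have hxD := D.min'_mem hDne
    have hxE : x ∈ H.E := (Finset.mem_filter.mp hxD).1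
    have hxne : g x ≠ fmin x := (Finset.mem_filter.mp hxD).2
    rcases lt_or_gt_of_ne hxne with hclt | hclt
    · obtain ⟨b, hbE, hbne, htr1, htr2⟩ := H.exchange hg hfminH hclt
      rcases lt_or_gt_of_ne hbne with hblt | hbgt
      · exact hg_act x hxE b hbE hblt htr1
      · exact hmin_act b hbE x hxE hbgt htr2
    · obtain ⟨b, hbE, hbne, htr1, htr2⟩ := H.exchange hfminH hg hclt
      rcases lt_or_gt_of_ne hbne with hblt | hbgt
      · exact hmin_act x hxE b hbE hblt htr1
      · exact hg_act b hbE x hxE hbgt htr2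
  have hsetmax : {f : β → ℕ | H.IsHypertree f ∧ H.intInact o f = 0} = {fmax} := by
    ext g
    simp only [Set.mem_setOf_eq, Set.mem_singleton_iff]
    constructor
    · rintro ⟨h1, h2⟩
      exact huniq_int g h1 h2
    · rintro rfl
      exact ⟨hfmaxH, hmax0⟩
  have hsetmin : {f : β → ℕ | H.IsHypertree f ∧ H.extInact o f = 0} = {fmin} := by
    ext g
    simp only [Set.mem_setOf_eq, Set.mem_singleton_iff]
    constructor
    · rintro ⟨h1, h2⟩
      exact huniq_ext g h1 h2
    · rintro rfl
      exact ⟨hfminH, hmin0⟩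
  refine ⟨⟨fmax, ⟨hfmaxH, hmax0⟩, fun g hg => huniq_int g hg.1 hg.2⟩,
    ⟨fmin, ⟨hfminH, hmin0⟩, fun g hg => huniq_ext g hg.1 hg.2⟩, ?_, ?_⟩
  · rw [hsetmax]
    exact Set.ncard_singleton _
  · rw [hsetmin]
    exact Set.ncard_singleton _
end
end

section
/- Let H = (V, E) be a hypergraph with Bip H connected, and construct H' from H by either (a) adding a singleton hyperedge e' = {v} to E for some v ∈ V, or (b) adding a new vertex v' to V and making it a member of exactly one hyperedge e ∈ E. Then in both cases I_{H'} = I_H and X_{H'} = X_H. -/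
open SimpleGraph Finset
open scoped Classical

noncomputable section

variable {α β : Type} [DecidableEq α] [DecidableEq β]

/-- The hypergraph obtained from `H` by adding a new singleton hyperedge `{v}`
(with fresh index `b₀`). -/
def Hypergraph'.addSingleton (H : Hypergraph' α β) (b₀ : β) (v : α)
    (hv : v ∈ H.V) (hb : b₀ ∉ H.E) : Hypergraph' α β where
  V := H.V
  E := insert b₀ H.E
  incid := Function.update H.incid b₀ {v}
  incid_sub := by
    intro e he
    rcases Finset.mem_insert.mp he with rfl | he'
    · simpa [Function.update_self] using Finset.singleton_subset_iff.mpr hv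
    · have hne : e ≠ b₀ := fun h => hb (h ▸ he')
      rw [Function.update_of_ne hne]
      exact H.incid_sub e he'
  incid_nonempty := by
    intro e he
    rcases Finset.mem_insert.mp he with rfl | he'
    · simp [Function.update_self]
    · have hne : e ≠ b₀ := fun h => hb (h ▸ he')
      rw [Function.update_of_ne hne]
      exact H.incid_nonempty e he'

/-- The hypergraph obtained from `H` by adding a new vertex `v'` and making it a member
of exactly the one hyperedge `e`. -/
def Hypergraph'.addVertex (H : Hypergraph' α β) (v' : α) (e : β)
    (he : e ∈ H.E) (hv' : v' ∉ H.V) : Hypergraph' α β where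
  V := insert v' H.V
  E := H.E
  incid := fun x => if x = e then insert v' (H.incid x) else H.incid x
  incid_sub := by
    intro a ha
    try dsimp only
    by_cases h : a = e
    · rw [if_pos h]
      exact Finset.insert_subset_insert _ (H.incid_sub a ha)
    · rw [if_neg h]
      exact (H.incid_sub a ha).trans (Finset.subset_insert _ _)
  incid_nonempty := by
    intro a ha
    try dsimp only
    by_cases h : a = e
    · rw [if_pos h]
      exact Finset.insert_nonempty _ _
    · rw [if_neg h]
      exact H.incid_nonempty a ha

section Ext

variable {W W' : Type} (ι : W → W') (w₀ : W') (u : W)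

/-- Add a leaf `w₀` attached at `ι u` to (the image under `ι` of) a graph. -/
def extG (T : SimpleGraph W) : SimpleGraph W' :=
  SimpleGraph.fromRel (fun x y =>
    (∃ a b, x = ι a ∧ y = ι b ∧ T.Adj a b) ∨ (x = w₀ ∧ y = ι u))

/-- Restrict a graph along `ι`. -/
def restrG (T' : SimpleGraph W') : SimpleGraph W where
  Adj a b := T'.Adj (ι a) (ι b)
  symm := ⟨fun a b h => T'.adj_symm h⟩
  loopless := ⟨fun a h => T'.loopless.irrefl _ h⟩

lemma extG_adj (hinj : Function.Injective ι) (hni : ∀ a, ι a ≠ w₀)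
    {T : SimpleGraph W} {x y : W'} :
    (extG ι w₀ u T).Adj x y ↔
      (∃ a b, x = ι a ∧ y = ι b ∧ T.Adj a b) ∨ (x = w₀ ∧ y = ι u) ∨ (x = ι u ∧ y = w₀) := by
  unfold extG
  rw [SimpleGraph.fromRel_adj]
  constructor
  · rintro ⟨hne, (⟨a, b, rfl, rfl, hab⟩ | ⟨rfl, rfl⟩) | (⟨a, b, rfl, rfl, hab⟩ | ⟨rfl, rfl⟩)⟩
    · exact Or.inl ⟨a, b, rfl, rfl, hab⟩
    · exact Or.inr (Or.inl ⟨rfl, rfl⟩)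
    · exact Or.inl ⟨b, a, rfl, rfl, hab.symm⟩
    · exact Or.inr (Or.inr ⟨rfl, rfl⟩)
  · rintro (⟨a, b, rfl, rfl, hab⟩ | ⟨rfl, rfl⟩ | ⟨rfl, rfl⟩)
    · exact ⟨fun h => hab.ne (hinj h), Or.inl (Or.inl ⟨a, b, rfl, rfl, hab⟩)⟩
    · exact ⟨fun h => hni u h.symm, Or.inl (Or.inr ⟨rfl, rfl⟩)⟩
    · exact ⟨fun h => hni u h, Or.inr (Or.inr ⟨rfl, rfl⟩)⟩

/-- The inclusion homomorphism `T →g extG T`. -/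
def extHom (hinj : Function.Injective ι) (hni : ∀ a, ι a ≠ w₀) (T : SimpleGraph W) :
    T →g extG ι w₀ u T where
  toFun := ι
  map_rel' := fun {a b} h => (extG_adj ι w₀ u hinj hni).2 (Or.inl ⟨a, b, rfl, rfl, h⟩)

/-- The inclusion homomorphism `restrG T' →g T'`. -/
def restrHom (T' : SimpleGraph W') : restrG ι T' →g T' where
  toFun := ι
  map_rel' := fun {_ _} h => h

lemma restr_ext (hinj : Function.Injective ι) (hni : ∀ a, ι a ≠ w₀) (T : SimpleGraph W) : restrG ι (extG ι w₀ u T) = T := by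
  ext a b
  show (extG ι w₀ u T).Adj (ι a) (ι b) ↔ _
  rw [extG_adj ι w₀ u hinj hni]
  constructor
  · rintro (⟨a', b', ha, hb, hab⟩ | ⟨h, _⟩ | ⟨_, h⟩)
    · rwa [hinj ha, hinj hb]
    · exact absurd h (hni a)
    · exact absurd h (hni b)
  · intro h; exact Or.inl ⟨a, b, rfl, rfl, h⟩

lemma ext_restr (hinj : Function.Injective ι) (hni : ∀ a, ι a ≠ w₀)
    (hsurj : ∀ x, x ≠ w₀ → ∃ a, ι a = x) (T' : SimpleGraph W') (hnb : ∀ x, T'.Adj w₀ x ↔ x = ι u) :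
    extG ι w₀ u (restrG ι T') = T' := by
  ext x y
  rw [extG_adj ι w₀ u hinj hni]
  constructor
  · rintro (⟨a, b, rfl, rfl, hab⟩ | ⟨rfl, rfl⟩ | ⟨rfl, rfl⟩)
    · exact hab
    · exact (hnb _).2 rfl
    · exact ((hnb _).2 rfl).symm
  · intro h
    by_cases hx : x = w₀
    · subst hx; exact Or.inr (Or.inl ⟨rfl, (hnb _).1 h⟩)
    by_cases hy : y = w₀
    · subst hy; exact Or.inr (Or.inr ⟨(hnb _).1 h.symm, rfl⟩)
    obtain ⟨a, rfl⟩ := hsurj x hx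
    obtain ⟨b, rfl⟩ := hsurj y hy
    exact Or.inl ⟨a, b, rfl, rfl, h⟩

lemma proj_walk (hinj : Function.Injective ι) (hsurj : ∀ x, x ≠ w₀ → ∃ a, ι a = x)
    {T' : SimpleGraph W'} {x y : W'} (p : T'.Walk x y) :
    w₀ ∉ p.support → ∀ (a b : W) (ha : ι a = x) (hb : ι b = y),
      ∃ q : (restrG ι T').Walk a b, q.map (restrHom ι T') = p.copy ha.symm hb.symm := by
  induction p with
  | nil =>
    intro hs a b ha hb
    subst hb
    have hab : a = b := hinj (ha.trans rfl)
    subst hab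
    exact ⟨SimpleGraph.Walk.nil, by simp; rfl⟩
  | @cons x z y hadj p ih =>
    intro hs a b ha hb
    rw [SimpleGraph.Walk.support_cons] at hs
    have hz : z ≠ w₀ := fun h => hs (List.mem_cons_of_mem _ (h ▸ p.start_mem_support))
    obtain ⟨c, hc⟩ := hsurj z hz
    have hadj' : (restrG ι T').Adj a c := by
      show T'.Adj (ι a) (ι c); rw [ha, hc]; exact hadj
    obtain ⟨q, hq⟩ := ih (fun h => hs (List.mem_cons_of_mem _ h)) c b hc hb
    refine ⟨SimpleGraph.Walk.cons hadj' q, ?_⟩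
    rw [SimpleGraph.Walk.map_cons, hq]
    subst ha hb hc
    rfl

lemma ext_connected (hinj : Function.Injective ι) (hni : ∀ a, ι a ≠ w₀)
    (hsurj : ∀ x, x ≠ w₀ → ∃ a, ι a = x) {T : SimpleGraph W} (hT : T.Connected) :
    (extG ι w₀ u T).Connected := by
  have key : ∀ x : W', (extG ι w₀ u T).Reachable x (ι u) := by
    intro x
    by_cases hx : x = w₀
    · rw [hx]
      exact SimpleGraph.Adj.reachable
        ((extG_adj ι w₀ u hinj hni).2 (Or.inr (Or.inl ⟨rfl, rfl⟩)))
    · obtain ⟨a, rfl⟩ := hsurj x hx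
      obtain ⟨p⟩ := hT.preconnected a u
      exact ⟨p.map (extHom ι w₀ u hinj hni T)⟩
  have : Nonempty W' := ⟨w₀⟩
  exact ⟨fun x y => (key x).trans (key y).symm⟩

lemma first_edge_mem {T' : SimpleGraph W'} (hnb1 : ∀ x, T'.Adj w₀ x → x = ι u) {t : W'}
    (p : T'.Walk w₀ t) (hne : w₀ ≠ t) : s(w₀, ι u) ∈ p.edges := by
  obtain ⟨z, h, q, rfl⟩ := SimpleGraph.Walk.exists_eq_cons_of_ne hne p
  have := hnb1 z h
  subst this
  simp

lemma last_edge_mem {T' : SimpleGraph W'} (hnb1 : ∀ x, T'.Adj w₀ x → x = ι u) {t : W'}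
    (p : T'.Walk t w₀) (hne : w₀ ≠ t) : s(w₀, ι u) ∈ p.edges := by
  have := first_edge_mem ι w₀ u hnb1 p.reverse hne
  rwa [SimpleGraph.Walk.edges_reverse, List.mem_reverse] at this

lemma no_cycle_through (hni : ∀ a, ι a ≠ w₀) {T' : SimpleGraph W'}
    (hnb1 : ∀ x, T'.Adj w₀ x → x = ι u) {x : W'} (c : T'.Walk x x)
    (hc : c.IsCycle) : w₀ ∉ c.support := by
  intro hw
  have hc' := hc.rotate hw
  revert hc'
  generalize c.rotate w₀ hw = c'
  intro hc'
  cases c' with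
  | nil => exact hc'.not_of_nil
  | cons h p =>
    rw [SimpleGraph.Walk.cons_isCycle_iff] at hc'
    have hz := hnb1 _ h
    subst hz
    exact hc'.2 (last_edge_mem ι w₀ u hnb1 p (fun he => hni u he.symm))

lemma ext_acyclic (hinj : Function.Injective ι) (hni : ∀ a, ι a ≠ w₀)
    (hsurj : ∀ x, x ≠ w₀ → ∃ a, ι a = x) {T : SimpleGraph W} (hT : T.IsAcyclic) :
    (extG ι w₀ u T).IsAcyclic := by
  intro x c hc
  have hnb1 : ∀ z, (extG ι w₀ u T).Adj w₀ z → z = ι u := by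
    intro z hz
    rcases (extG_adj ι w₀ u hinj hni).1 hz with ⟨a, b, ha, _, _⟩ | ⟨_, h⟩ | ⟨h, _⟩
    · exact absurd ha.symm (hni a)
    · exact h
    · exact absurd h.symm (hni u)
  have hw : w₀ ∉ c.support := no_cycle_through ι w₀ u hni hnb1 c hc
  have hx : x ≠ w₀ := fun h => hw (h ▸ c.start_mem_support)
  obtain ⟨a, ha⟩ := hsurj x hx
  obtain ⟨q, hq⟩ := proj_walk ι w₀ hinj hsurj c hw a a ha ha
  have hqc : q.IsCycle := by
    rw [← SimpleGraph.Walk.map_isCycle_iff_of_injective (p := q) (f := restrHom ι (extG ι w₀ u T)) hinj]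
    rw [hq]
    exact (SimpleGraph.Walk.isCycle_copy c ha.symm).2 hc
  rw [← restr_ext ι w₀ u hinj hni T] at hT
  exact hT q hqc

lemma ext_isTree (hinj : Function.Injective ι) (hni : ∀ a, ι a ≠ w₀)
    (hsurj : ∀ x, x ≠ w₀ → ∃ a, ι a = x) {T : SimpleGraph W} (hT : T.IsTree) :
    (extG ι w₀ u T).IsTree :=
  ⟨ext_connected ι w₀ u hinj hni hsurj hT.isConnected,
   ext_acyclic ι w₀ u hinj hni hsurj hT.IsAcyclic⟩

lemma path_avoid {T' : SimpleGraph W'} (hnb1 : ∀ x, T'.Adj w₀ x → x = ι u)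
    {x y : W'} (p : T'.Walk x y) (hp : p.IsPath) (hx : x ≠ w₀) (hy : y ≠ w₀) :
    w₀ ∉ p.support := by
  intro hw
  have h1 : s(w₀, ι u) ∈ (p.takeUntil w₀ hw).edges :=
    last_edge_mem ι w₀ u hnb1 _ (Ne.symm hx)
  have h2 : s(w₀, ι u) ∈ (p.dropUntil w₀ hw).edges :=
    first_edge_mem ι w₀ u hnb1 _ (Ne.symm hy)
  have hnd := hp.isTrail.edges_nodup
  rw [← SimpleGraph.Walk.take_spec p hw, SimpleGraph.Walk.edges_append,
    List.nodup_append] at hnd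
  exact hnd.2.2 _ h1 _ h2 rfl

lemma restr_connected (hinj : Function.Injective ι) (hni : ∀ a, ι a ≠ w₀)
    (hsurj : ∀ x, x ≠ w₀ → ∃ a, ι a = x) {T' : SimpleGraph W'}
    (hT' : T'.Connected) (hnb1 : ∀ x, T'.Adj w₀ x → x = ι u) :
    (restrG ι T').Connected := by
  have : Nonempty W := ⟨u⟩
  refine ⟨fun a b => ?_⟩
  obtain ⟨p⟩ := hT'.preconnected (ι a) (ι b)
  have hw : w₀ ∉ p.toPath.val.support :=
    path_avoid ι w₀ u hnb1 _ p.toPath.property (hni a) (hni b)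
  obtain ⟨q, _⟩ := proj_walk ι w₀ hinj hsurj p.toPath.val hw a b rfl rfl
  exact ⟨q⟩

/-- In a connected graph, the leaf `w₀` is actually adjacent to `ι u`. -/
lemma nb_iff (hni : ∀ a, ι a ≠ w₀) {T' : SimpleGraph W'} (hT' : T'.Connected)
    (hnb1 : ∀ x, T'.Adj w₀ x → x = ι u) : ∀ x, T'.Adj w₀ x ↔ x = ι u := by
  have hne : w₀ ≠ ι u := fun h => hni u h.symm
  obtain ⟨p⟩ := hT'.preconnected w₀ (ι u)
  obtain ⟨z, h, q, rfl⟩ := SimpleGraph.Walk.exists_eq_cons_of_ne hne p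
  have hz := hnb1 z h
  subst hz
  exact fun x => ⟨hnb1 x, fun hx => hx ▸ h⟩

lemma restr_acyclic {T' : SimpleGraph W'} (hinj : Function.Injective ι)
    (hT' : T'.IsAcyclic) : (restrG ι T').IsAcyclic := by
  intro a q hq
  exact hT' (q.map (restrHom ι T'))
    ((SimpleGraph.Walk.map_isCycle_iff_of_injective hinj).2 hq)

lemma restr_isTree (hinj : Function.Injective ι) (hni : ∀ a, ι a ≠ w₀)
    (hsurj : ∀ x, x ≠ w₀ → ∃ a, ι a = x) {T' : SimpleGraph W'}
    (hT' : T'.IsTree) (hnb1 : ∀ x, T'.Adj w₀ x → x = ι u) :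
    (restrG ι T').IsTree :=
  ⟨restr_connected ι w₀ u hinj hni hsurj hT'.isConnected hnb1,
   restr_acyclic ι hinj hT'.IsAcyclic⟩

lemma ext_neighborSet_w0 (hinj : Function.Injective ι) (hni : ∀ a, ι a ≠ w₀)
    (T : SimpleGraph W) : (extG ι w₀ u T).neighborSet w₀ = {ι u} := by
  ext z
  simp only [SimpleGraph.mem_neighborSet, Set.mem_singleton_iff]
  rw [extG_adj ι w₀ u hinj hni]
  constructor
  · rintro (⟨a, b, ha, _, _⟩ | ⟨_, h⟩ | ⟨h, _⟩)
    · exact absurd ha.symm (hni a)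
    · exact h
    · exact absurd h.symm (hni u)
  · rintro rfl; exact Or.inr (Or.inl ⟨rfl, rfl⟩)

lemma ext_degr_w0 (hinj : Function.Injective ι) (hni : ∀ a, ι a ≠ w₀)
    (T : SimpleGraph W) : degr (extG ι w₀ u T) w₀ = 1 := by
  rw [degr, ext_neighborSet_w0 ι w₀ u hinj hni T, Set.ncard_singleton]

lemma ext_neighborSet_im (hinj : Function.Injective ι) (hni : ∀ a, ι a ≠ w₀)
    (T : SimpleGraph W) (a : W) :
    (extG ι w₀ u T).neighborSet (ι a) =
      ι '' T.neighborSet a ∪ (if a = u then {w₀} else ∅) := by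
  ext z
  simp only [SimpleGraph.mem_neighborSet, Set.mem_union, Set.mem_image]
  rw [extG_adj ι w₀ u hinj hni]
  constructor
  · rintro (⟨a', b, ha, rfl, hab⟩ | ⟨h, _⟩ | ⟨h, rfl⟩)
    · exact Or.inl ⟨b, hinj ha ▸ hab, rfl⟩
    · exact absurd h (hni a)
    · have : a = u := hinj h
      subst this
      simp
  · rintro (⟨b, hab, rfl⟩ | hz)
    · exact Or.inl ⟨a, b, rfl, rfl, hab⟩
    · by_cases hau : a = u
      · rw [if_pos hau] at hz
        subst hau
        rw [hz]
        exact Or.inr (Or.inr ⟨rfl, rfl⟩)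
      · rw [if_neg hau] at hz
        exact absurd hz (Set.notMem_empty z)

lemma ext_degr_im [Finite W'] (hinj : Function.Injective ι) (hni : ∀ a, ι a ≠ w₀)
    (T : SimpleGraph W) (a : W) :
    degr (extG ι w₀ u T) (ι a) = degr T a + (if a = u then 1 else 0) := by
  rw [degr, degr, ext_neighborSet_im ι w₀ u hinj hni T a]
  rw [Set.ncard_union_eq ?_ (Set.toFinite _) (Set.toFinite _)]
  · rw [Set.ncard_image_of_injective _ hinj]
    congr 1
    by_cases hau : a = u <;> simp [hau]
  · by_cases hau : a = u
    · rw [if_pos hau]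
      rw [Set.disjoint_singleton_right]
      rintro ⟨b, _, hb⟩
      exact hni b hb
    · simp [if_neg hau]

end Ext


section CaseA

variable (H : Hypergraph' α β) (b₀ : β) (hb : b₀ ∉ H.E) (v : α) (hv : v ∈ H.V)


/-- The inclusion of vertex types for the addSingleton construction. -/
def iotaA : (↥H.V ⊕ ↥H.E) → (↥(H.addSingleton b₀ v hv hb).V ⊕ ↥(H.addSingleton b₀ v hv hb).E) :=
  Sum.map (fun w => ⟨w.1, w.2⟩) (fun e => ⟨e.1, Finset.mem_insert_of_mem e.2⟩)

def wA : ↥(H.addSingleton b₀ v hv hb).V ⊕ ↥(H.addSingleton b₀ v hv hb).E :=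
  Sum.inr ⟨b₀, Finset.mem_insert_self b₀ H.E⟩

def uA : ↥H.V ⊕ ↥H.E := Sum.inl ⟨v, hv⟩

lemma iotaA_inj : Function.Injective (iotaA H b₀ hb v hv) := by
  exact Sum.map_injective.2 ⟨fun a b h => Subtype.ext (by have h' := congrArg Subtype.val h; exact h'),
    fun a b h => Subtype.ext (by have h' := congrArg Subtype.val h; exact h')⟩

lemma iotaA_ne : ∀ a, iotaA H b₀ hb v hv a ≠ wA H b₀ hb v hv := by
  rintro (a | a) h <;> simp only [iotaA, wA, Sum.map_inl, Sum.map_inr] at h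
  · cases h
  · have h : (a : β) = b₀ := congrArg Subtype.val (Sum.inr.inj h)
    exact hb (h ▸ a.2)

lemma iotaA_surj : ∀ x, x ≠ wA H b₀ hb v hv → ∃ a, iotaA H b₀ hb v hv a = x := by
  rintro (⟨x, hx⟩ | ⟨x, hx⟩) hne
  · exact ⟨Sum.inl ⟨x, hx⟩, rfl⟩
  · have hxb : x ≠ b₀ := by
      rintro rfl
      exact hne (by rw [wA])
    have hxE : x ∈ H.E := by
      have := hx
      simp only [Hypergraph'.addSingleton, Finset.mem_insert] at this
      exact this.resolve_left hxb
    exact ⟨Sum.inr ⟨x, hxE⟩, by simp [iotaA]⟩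

lemma nbA {T' : SimpleGraph (↥(H.addSingleton b₀ v hv hb).V ⊕ ↥(H.addSingleton b₀ v hv hb).E)}
    (hle : T' ≤ (H.addSingleton b₀ v hv hb).Bip) :
    ∀ x, T'.Adj (wA H b₀ hb v hv) x → x = iotaA H b₀ hb v hv (uA H v hv) := by
  intro x hadj
  have h := hle hadj
  rw [Hypergraph'.Bip, SimpleGraph.fromRel_adj] at h
  obtain ⟨hne, (⟨v', e', h1, h2, h3⟩ | ⟨v', e', h1, h2, h3⟩)⟩ := h
  · rw [wA] at h1; cases h1
  · rw [wA, Sum.inr.injEq] at h2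
    have he' : (e' : β) = b₀ := by rw [← h2]
    rw [he'] at h3
    simp only [Hypergraph'.addSingleton, Function.update_self, Finset.mem_singleton] at h3
    rw [h1, iotaA, uA, Sum.map_inl, Sum.inl.injEq]
    exact Subtype.ext h3

lemma extA_le {T : SimpleGraph (↥H.V ⊕ ↥H.E)} (hle : T ≤ H.Bip) :
    extG (iotaA H b₀ hb v hv) (wA H b₀ hb v hv) (uA H v hv) T ≤
      (H.addSingleton b₀ v hv hb).Bip := by
  intro x y hadj
  rw [extG_adj _ _ _ (iotaA_inj H b₀ hb v hv) (iotaA_ne H b₀ hb v hv)] at hadj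
  rw [Hypergraph'.Bip, SimpleGraph.fromRel_adj]
  rcases hadj with ⟨a, b, rfl, rfl, hab⟩ | ⟨rfl, rfl⟩ | ⟨rfl, rfl⟩
  · refine ⟨fun h => (hab.ne) (iotaA_inj H b₀ hb v hv h), ?_⟩
    have h := hle hab
    rw [Hypergraph'.Bip, SimpleGraph.fromRel_adj] at h
    obtain ⟨-, (⟨v', e', rfl, rfl, h3⟩ | ⟨v', e', rfl, rfl, h3⟩)⟩ := h
    · refine Or.inl ⟨⟨v'.1, v'.2⟩, ⟨e'.1, Finset.mem_insert_of_mem e'.2⟩, rfl, rfl, ?_⟩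
      simp only [Hypergraph'.addSingleton]
      rw [Function.update_of_ne (fun h : (e' : β) = b₀ => hb (h ▸ e'.2))]
      exact h3
    · refine Or.inr ⟨⟨v'.1, v'.2⟩, ⟨e'.1, Finset.mem_insert_of_mem e'.2⟩, rfl, rfl, ?_⟩
      simp only [Hypergraph'.addSingleton]
      rw [Function.update_of_ne (fun h : (e' : β) = b₀ => hb (h ▸ e'.2))]
      exact h3
  · refine ⟨fun h => iotaA_ne H b₀ hb v hv _ h.symm, ?_⟩
    refine Or.inr ⟨⟨v, hv⟩, ⟨b₀, Finset.mem_insert_self b₀ H.E⟩, rfl, rfl, ?_⟩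
    simp [Hypergraph'.addSingleton]
  · refine ⟨fun h => iotaA_ne H b₀ hb v hv _ h, ?_⟩
    refine Or.inl ⟨⟨v, hv⟩, ⟨b₀, Finset.mem_insert_self b₀ H.E⟩, rfl, rfl, ?_⟩
    simp [Hypergraph'.addSingleton]

lemma restA_le {T' : SimpleGraph (↥(H.addSingleton b₀ v hv hb).V ⊕ ↥(H.addSingleton b₀ v hv hb).E)}
    (hle : T' ≤ (H.addSingleton b₀ v hv hb).Bip) :
    restrG (iotaA H b₀ hb v hv) T' ≤ H.Bip := by
  intro x y hadj
  have h : T'.Adj (iotaA H b₀ hb v hv x) (iotaA H b₀ hb v hv y) := hadj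
  have h' := hle h
  rw [Hypergraph'.Bip, SimpleGraph.fromRel_adj] at h' ⊢
  refine ⟨fun hxy => h'.1 (congrArg _ hxy), ?_⟩
  rcases h'.2 with ⟨v', e', h1, h2, h3⟩ | ⟨v', e', h1, h2, h3⟩
  · rcases x with w | e_x
    · rcases y with w' | e_y
      · rw [iotaA, Sum.map_inl] at h2; cases h2
      · rw [iotaA, Sum.map_inl, Sum.inl.injEq] at h1
        rw [iotaA, Sum.map_inr, Sum.inr.injEq] at h2
        refine Or.inl ⟨w, e_y, rfl, rfl, ?_⟩
        have h3' : (w : α) ∈ (H.addSingleton b₀ v hv hb).incid e_y.1 := by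
          rw [← h1, ← h2] at h3; exact h3
        simpa only [Hypergraph'.addSingleton,
          Function.update_of_ne (fun h : (e_y : β) = b₀ => hb (h ▸ e_y.2))] using h3'
    · rw [iotaA, Sum.map_inr] at h1; cases h1
  · rcases y with w | e_y
    · rcases x with w' | e_x
      · rw [iotaA, Sum.map_inl] at h2; cases h2
      · rw [iotaA, Sum.map_inl, Sum.inl.injEq] at h1
        rw [iotaA, Sum.map_inr, Sum.inr.injEq] at h2
        refine Or.inr ⟨w, e_x, rfl, rfl, ?_⟩
        have h3' : (w : α) ∈ (H.addSingleton b₀ v hv hb).incid e_x.1 := by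
          rw [← h1, ← h2] at h3; exact h3
        simpa only [Hypergraph'.addSingleton,
          Function.update_of_ne (fun h : (e_x : β) = b₀ => hb (h ▸ e_x.2))] using h3'
    · rw [iotaA, Sum.map_inr] at h1; cases h1

lemma hypA (g : β → ℕ) :
    (H.addSingleton b₀ v hv hb).IsHypertree g ↔ H.IsHypertree g := by
  have hinj := iotaA_inj H b₀ hb v hv
  have hni := iotaA_ne H b₀ hb v hv
  have hsurj := iotaA_surj H b₀ hb v hv
  constructor
  · rintro ⟨T', ⟨hle, htree⟩, hvan, hdeg⟩
    have hnb1 := nbA H b₀ hb v hv hle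
    have hnb := nb_iff _ _ _ hni htree.isConnected hnb1
    have hrw := ext_restr _ _ _ hinj hni hsurj T' hnb
    have hgb : g b₀ = 0 := by
      have h1 := hdeg ⟨b₀, Finset.mem_insert_self b₀ H.E⟩
      have h2 : degr T' (wA H b₀ hb v hv) = 1 := by
        have h := ext_degr_w0 (iotaA H b₀ hb v hv) (wA H b₀ hb v hv) (uA H v hv) hinj hni
          (restrG (iotaA H b₀ hb v hv) T')
        rwa [hrw] at h
      have h3 : (1 : ℕ) = g b₀ + 1 := h2.symm.trans h1
      omega
    refine ⟨restrG (iotaA H b₀ hb v hv) T',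
      ⟨⟨restA_le H b₀ hb v hv hle, restr_isTree _ _ _ hinj hni hsurj htree hnb1⟩, ?_, ?_⟩⟩
    · intro e he
      by_cases heb : e = b₀
      · exact heb ▸ hgb
      · refine hvan e ?_
        simp only [Hypergraph'.addSingleton, Finset.mem_insert]
        tauto
    · intro e
      have h1 := hdeg ⟨e.1, Finset.mem_insert_of_mem e.2⟩
      have h2 := ext_degr_im (iotaA H b₀ hb v hv) (wA H b₀ hb v hv) (uA H v hv) hinj hni
        (restrG (iotaA H b₀ hb v hv) T') (Sum.inr e)
      rw [hrw, if_neg (show (Sum.inr e : ↥H.V ⊕ ↥H.E) ≠ uA H v hv from by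
        rw [uA]; exact fun h => Sum.inr_ne_inl h)] at h2
      have h4 : degr T' (iotaA H b₀ hb v hv (Sum.inr e)) = g e.1 + 1 := h1
      rw [h4] at h2
      omega
  · rintro ⟨T, ⟨hle, htree⟩, hvan, hdeg⟩
    refine ⟨extG (iotaA H b₀ hb v hv) (wA H b₀ hb v hv) (uA H v hv) T,
      ⟨⟨extA_le H b₀ hb v hv hle, ext_isTree _ _ _ hinj hni hsurj htree⟩, ?_, ?_⟩⟩
    · intro e he
      refine hvan e (fun heE => he ?_)
      simp only [Hypergraph'.addSingleton, Finset.mem_insert]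
      tauto
    · intro e'
      by_cases heb : (e' : β) = b₀
      · have hwe : Sum.inr e' = wA H b₀ hb v hv := by
          rw [wA]; exact congrArg Sum.inr (Subtype.ext heb)
        rw [hwe, ext_degr_w0 _ _ _ hinj hni, heb, hvan b₀ hb]
      · have heE : (e' : β) ∈ H.E := by
          have := e'.2
          simp only [Hypergraph'.addSingleton, Finset.mem_insert] at this
          exact this.resolve_left heb
        have h3 : Sum.inr e' = iotaA H b₀ hb v hv (Sum.inr ⟨e'.1, heE⟩) := rfl
        rw [h3, ext_degr_im _ _ _ hinj hni _ _,
          if_neg (by rw [uA]; exact fun h => Sum.inr_ne_inl h), hdeg ⟨e'.1, heE⟩]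

include hb in
lemma not_hyp_at_b0 (g : β → ℕ) (hgb : g b₀ ≠ 0) : ¬ H.IsHypertree g := by
  rintro ⟨T, _, hvan, _⟩
  exact hgb (hvan b₀ hb)

lemma transA (f : β → ℕ) (a b : β) :
    (H.addSingleton b₀ v hv hb).TransferPossible f a b ↔ H.TransferPossible f a b := by
  unfold Hypergraph'.TransferPossible
  rw [hypA]

lemma intActA (o : LinearOrder β) (f : β → ℕ) (x : β) (hx : x ∈ H.E) :
    (H.addSingleton b₀ v hv hb).InternallyActive o f x ↔ H.InternallyActive o f x := by
  constructor
  · intro h y hy hlt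
    rw [← transA H b₀ hb v hv]
    exact h y (Finset.mem_insert_of_mem hy) hlt
  · intro h y hy hlt
    have hy' : y = b₀ ∨ y ∈ H.E := Finset.mem_insert.1 hy
    rcases hy' with hyb | hy'
    · rw [hyb, transA H b₀ hb v hv]
      rintro ⟨-, hyp⟩
      refine not_hyp_at_b0 H b₀ hb _ ?_ hyp
      have hxb : b₀ ≠ x := fun h => hb (h ▸ hx)
      simp [transferFun, hxb]
    · rw [transA H b₀ hb v hv]
      exact h y hy' hlt

lemma extActA (o : LinearOrder β) (f : β → ℕ) (hf : H.IsHypertree f) (x : β) (hx : x ∈ H.E) :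
    (H.addSingleton b₀ v hv hb).ExternallyActive o f x ↔ H.ExternallyActive o f x := by
  have hfb : f b₀ = 0 := by
    obtain ⟨T, _, hvan, _⟩ := hf
    exact hvan b₀ hb
  constructor
  · intro h y hy hlt
    rw [← transA H b₀ hb v hv]
    exact h y (Finset.mem_insert_of_mem hy) hlt
  · intro h y hy hlt
    have hy' : y = b₀ ∨ y ∈ H.E := Finset.mem_insert.1 hy
    rcases hy' with hyb | hy'
    · rw [hyb]
      rintro ⟨hpos, -⟩
      rw [hfb] at hpos
      exact Nat.lt_irrefl 0 hpos
    · rw [transA H b₀ hb v hv]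
      exact h y hy' hlt

lemma intActb0 (o : LinearOrder β) (f : β → ℕ) (hf : H.IsHypertree f) :
    (H.addSingleton b₀ v hv hb).InternallyActive o f b₀ := by
  have hfb : f b₀ = 0 := by
    obtain ⟨T, _, hvan, _⟩ := hf
    exact hvan b₀ hb
  intro y hy hlt
  rintro ⟨hpos, -⟩
  rw [hfb] at hpos
  exact Nat.lt_irrefl 0 hpos

lemma extActb0 (o : LinearOrder β) (f : β → ℕ) :
    (H.addSingleton b₀ v hv hb).ExternallyActive o f b₀ := by
  intro y hy hlt
  rw [transA H b₀ hb v hv]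
  rintro ⟨-, hyp⟩
  refine not_hyp_at_b0 H b₀ hb _ ?_ hyp
  letI := o
  have hyb : b₀ ≠ y := fun h => lt_irrefl y (h ▸ hlt)
  simp [transferFun, hyb]

lemma intInactA (o : LinearOrder β) (f : β → ℕ) (hf : H.IsHypertree f) :
    (H.addSingleton b₀ v hv hb).intInact o f = H.intInact o f := by
  unfold Hypergraph'.intInact
  have hEA : (H.addSingleton b₀ v hv hb).E = insert b₀ H.E := rfl
  rw [hEA, Finset.filter_insert, if_neg (not_not_intro (intActb0 H b₀ hb v hv o f hf))]
  refine congrArg Finset.card (Finset.filter_congr ?_)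
  intro x hx
  rw [not_iff_not]
  exact intActA H b₀ hb v hv o f x hx

lemma extInactA (o : LinearOrder β) (f : β → ℕ) (hf : H.IsHypertree f) :
    (H.addSingleton b₀ v hv hb).extInact o f = H.extInact o f := by
  unfold Hypergraph'.extInact
  have hEA : (H.addSingleton b₀ v hv hb).E = insert b₀ H.E := rfl
  rw [hEA, Finset.filter_insert, if_neg (not_not_intro (extActb0 H b₀ hb v hv o f))]
  refine congrArg Finset.card (Finset.filter_congr ?_)
  intro x hx
  rw [not_iff_not]
  exact extActA H b₀ hb v hv o f hf x hx

end CaseA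


lemma degr_pos {W : Type} [Finite W] {T : SimpleGraph W} (hT : T.Connected)
    {x y : W} (hxy : x ≠ y) : 0 < degr T x := by
  obtain ⟨p⟩ := hT.preconnected x y
  obtain ⟨z, h, q, rfl⟩ := SimpleGraph.Walk.exists_eq_cons_of_ne hxy p
  rw [degr, Set.ncard_pos (Set.toFinite _)]
  exact ⟨z, h⟩

section CaseB

variable (H : Hypergraph' α β) (v' : α) (e : β) (he : e ∈ H.E) (hv' : v' ∉ H.V)

def iotaB : (↥H.V ⊕ ↥H.E) → (↥(H.addVertex v' e he hv').V ⊕ ↥(H.addVertex v' e he hv').E) :=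
  Sum.map (fun w => ⟨w.1, Finset.mem_insert_of_mem w.2⟩) (fun x => ⟨x.1, x.2⟩)

def wB : ↥(H.addVertex v' e he hv').V ⊕ ↥(H.addVertex v' e he hv').E :=
  Sum.inl ⟨v', Finset.mem_insert_self v' H.V⟩

def uB : ↥H.V ⊕ ↥H.E := Sum.inr ⟨e, he⟩

/-- Add one to the value at `e`. -/
def phiB (f : β → ℕ) : β → ℕ := fun x => if x = e then f x + 1 else f x

lemma phiB_inj : Function.Injective (phiB e) := by
  intro f₁ f₂ h
  funext x
  have hx := congrFun h x
  simp only [phiB] at hx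
  by_cases hxe : x = e
  · rw [if_pos hxe, if_pos hxe] at hx
    omega
  · rwa [if_neg hxe, if_neg hxe] at hx

lemma iotaB_inj : Function.Injective (iotaB H v' e he hv') := by
  exact Sum.map_injective.2 ⟨fun a b h => Subtype.ext (by have h' := congrArg Subtype.val h; exact h'),
    fun a b h => Subtype.ext (by have h' := congrArg Subtype.val h; exact h')⟩

lemma iotaB_ne : ∀ a, iotaB H v' e he hv' a ≠ wB H v' e he hv' := by
  rintro (a | a) h <;> simp only [iotaB, wB, Sum.map_inl, Sum.map_inr] at h
  · have h : (a : α) = v' := congrArg Subtype.val (Sum.inl.inj h)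
    exact hv' (h ▸ a.2)
  · cases h

lemma iotaB_surj : ∀ x, x ≠ wB H v' e he hv' → ∃ a, iotaB H v' e he hv' a = x := by
  rintro (⟨x, hx⟩ | ⟨x, hx⟩) hne
  · have hxv : x ≠ v' := by
      rintro rfl
      exact hne (by rw [wB])
    have hxV : x ∈ H.V := by
      have := hx
      simp only [Hypergraph'.addVertex, Finset.mem_insert] at this
      exact this.resolve_left hxv
    exact ⟨Sum.inl ⟨x, hxV⟩, by simp [iotaB]⟩
  · exact ⟨Sum.inr ⟨x, hx⟩, rfl⟩

lemma nbB {T' : SimpleGraph (↥(H.addVertex v' e he hv').V ⊕ ↥(H.addVertex v' e he hv').E)}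
    (hle : T' ≤ (H.addVertex v' e he hv').Bip) :
    ∀ x, T'.Adj (wB H v' e he hv') x → x = iotaB H v' e he hv' (uB H e he) := by
  intro x hadj
  have h := hle hadj
  rw [Hypergraph'.Bip, SimpleGraph.fromRel_adj] at h
  obtain ⟨hne, (⟨v'', e'', h1, h2, h3⟩ | ⟨v'', e'', h1, h2, h3⟩)⟩ := h
  · rw [wB, Sum.inl.injEq] at h1
    have hv'' : (v'' : α) = v' := by rw [← h1]
    rw [hv''] at h3
    have hee : (e'' : β) = e := by
      by_contra hne'
      have h4 : v' ∈ H.incid e''.1 := by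
        simpa only [Hypergraph'.addVertex, if_neg hne'] using h3
      exact hv' (H.incid_sub e''.1 e''.2 h4)
    rw [h2, iotaB, uB, Sum.map_inr, Sum.inr.injEq]
    exact Subtype.ext hee
  · rw [wB] at h2; cases h2

lemma extB_le {T : SimpleGraph (↥H.V ⊕ ↥H.E)} (hle : T ≤ H.Bip) :
    extG (iotaB H v' e he hv') (wB H v' e he hv') (uB H e he) T ≤
      (H.addVertex v' e he hv').Bip := by
  intro x y hadj
  rw [extG_adj _ _ _ (iotaB_inj H v' e he hv') (iotaB_ne H v' e he hv')] at hadj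
  rw [Hypergraph'.Bip, SimpleGraph.fromRel_adj]
  have hincid : ∀ (e'' : ↥H.E) (w : ↥H.V), (w : α) ∈ H.incid e''.1 →
      (w : α) ∈ (H.addVertex v' e he hv').incid e''.1 := by
    intro e'' w hw
    simp only [Hypergraph'.addVertex]
    by_cases hee : (e'' : β) = e
    · rw [if_pos hee]; exact Finset.mem_insert_of_mem hw
    · rw [if_neg hee]; exact hw
  rcases hadj with ⟨a, b, rfl, rfl, hab⟩ | ⟨rfl, rfl⟩ | ⟨rfl, rfl⟩
  · refine ⟨fun h => (hab.ne) (iotaB_inj H v' e he hv' h), ?_⟩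
    have h := hle hab
    rw [Hypergraph'.Bip, SimpleGraph.fromRel_adj] at h
    obtain ⟨-, (⟨w, e'', rfl, rfl, h3⟩ | ⟨w, e'', rfl, rfl, h3⟩)⟩ := h
    · exact Or.inl ⟨⟨w.1, Finset.mem_insert_of_mem w.2⟩, ⟨e''.1, e''.2⟩, rfl, rfl,
        hincid e'' w h3⟩
    · exact Or.inr ⟨⟨w.1, Finset.mem_insert_of_mem w.2⟩, ⟨e''.1, e''.2⟩, rfl, rfl,
        hincid e'' w h3⟩
  · refine ⟨fun h => iotaB_ne H v' e he hv' _ h.symm, ?_⟩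
    refine Or.inl ⟨⟨v', Finset.mem_insert_self v' H.V⟩, ⟨e, he⟩, rfl, rfl, ?_⟩
    simp [Hypergraph'.addVertex]
  · refine ⟨fun h => iotaB_ne H v' e he hv' _ h, ?_⟩
    refine Or.inr ⟨⟨v', Finset.mem_insert_self v' H.V⟩, ⟨e, he⟩, rfl, rfl, ?_⟩
    simp [Hypergraph'.addVertex]

lemma restB_le {T' : SimpleGraph (↥(H.addVertex v' e he hv').V ⊕ ↥(H.addVertex v' e he hv').E)}
    (hle : T' ≤ (H.addVertex v' e he hv').Bip) :
    restrG (iotaB H v' e he hv') T' ≤ H.Bip := by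
  intro x y hadj
  have h : T'.Adj (iotaB H v' e he hv' x) (iotaB H v' e he hv' y) := hadj
  have h' := hle h
  rw [Hypergraph'.Bip, SimpleGraph.fromRel_adj] at h' ⊢
  refine ⟨fun hxy => h'.1 (congrArg _ hxy), ?_⟩
  have hback : ∀ (w : ↥H.V) (e'' : ↥H.E),
      (w : α) ∈ (H.addVertex v' e he hv').incid e''.1 → (w : α) ∈ H.incid e''.1 := by
    intro w e'' hw
    simp only [Hypergraph'.addVertex] at hw
    by_cases hee : (e'' : β) = e
    · rw [if_pos hee] at hw
      rcases Finset.mem_insert.1 hw with hveq | hmem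
      · exact absurd (hveq ▸ w.2) hv'
      · exact hee ▸ hmem
    · rwa [if_neg hee] at hw
  rcases h'.2 with ⟨w, e'', h1, h2, h3⟩ | ⟨w, e'', h1, h2, h3⟩
  · rcases x with a | a
    · rcases y with b | b
      · rw [iotaB, Sum.map_inl] at h2; cases h2
      · rw [iotaB, Sum.map_inl, Sum.inl.injEq] at h1
        rw [iotaB, Sum.map_inr, Sum.inr.injEq] at h2
        refine Or.inl ⟨a, b, rfl, rfl, hback a b ?_⟩
        rw [← h1, ← h2] at h3
        exact h3
    · rw [iotaB, Sum.map_inr] at h1; cases h1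
  · rcases y with b | b
    · rcases x with a | a
      · rw [iotaB, Sum.map_inl] at h2; cases h2
      · rw [iotaB, Sum.map_inl, Sum.inl.injEq] at h1
        rw [iotaB, Sum.map_inr, Sum.inr.injEq] at h2
        refine Or.inr ⟨b, a, rfl, rfl, hback b a ?_⟩
        rw [← h1, ← h2] at h3
        exact h3
    · rw [iotaB, Sum.map_inr] at h1; cases h1

lemma hypB (g : β → ℕ) :
    (H.addVertex v' e he hv').IsHypertree g ↔ ∃ f, H.IsHypertree f ∧ g = phiB e f := by
  have hinj := iotaB_inj H v' e he hv'
  have hni := iotaB_ne H v' e he hv'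
  have hsurj := iotaB_surj H v' e he hv'
  constructor
  · rintro ⟨T', ⟨hle, htree⟩, hvan, hdeg⟩
    have hnb1 := nbB H v' e he hv' hle
    have hnb := nb_iff _ _ _ hni htree.isConnected hnb1
    have hrw := ext_restr _ _ _ hinj hni hsurj T' hnb
    have hrtree := restr_isTree _ _ _ hinj hni hsurj htree hnb1
    -- degrees of the restricted tree
    have hdeg' : ∀ x : ↥H.E, degr (restrG (iotaB H v' e he hv') T') (Sum.inr x) +
        (if x.1 = e then 1 else 0) = g x.1 + 1 := by
      intro x
      have h2 := ext_degr_im (iotaB H v' e he hv') (wB H v' e he hv') (uB H e he) hinj hni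
        (restrG (iotaB H v' e he hv') T') (Sum.inr x)
      rw [hrw] at h2
      have h4 : degr T' (iotaB H v' e he hv' (Sum.inr x)) = g x.1 + 1 := hdeg ⟨x.1, x.2⟩
      rw [h4] at h2
      have hiff : (Sum.inr x = uB H e he) ↔ x.1 = e := by
        rw [uB, Sum.inr.injEq]
        exact ⟨fun h => congrArg Subtype.val h, fun h => Subtype.ext h⟩
      by_cases hxe : x.1 = e
      · rw [if_pos (hiff.2 hxe)] at h2
        rw [if_pos hxe]
        omega
      · rw [if_neg (fun h => hxe (hiff.1 h))] at h2
        rw [if_neg hxe]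
        omega
    have hge : 1 ≤ g e := by
      have h5 : degr (restrG (iotaB H v' e he hv') T') (Sum.inr ⟨e, he⟩) +
          (if (⟨e, he⟩ : ↥H.E).1 = e then 1 else 0) = g e + 1 := hdeg' ⟨e, he⟩
      rw [if_pos rfl] at h5
      have hpos : 0 < degr (restrG (iotaB H v' e he hv') T') (Sum.inr ⟨e, he⟩) := by
        obtain ⟨v₀, hv₀⟩ := H.incid_nonempty e he
        exact degr_pos hrtree.isConnected
          (show (Sum.inr ⟨e, he⟩ : ↥H.V ⊕ ↥H.E) ≠ Sum.inl ⟨v₀, H.incid_sub e he hv₀⟩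
            from fun h => Sum.inr_ne_inl h)
      omega
    refine ⟨fun x => if x = e then g x - 1 else g x, ⟨restrG (iotaB H v' e he hv') T',
      ⟨⟨restB_le H v' e he hv' hle, hrtree⟩, ?_, ?_⟩⟩, ?_⟩
    · intro x hx
      have hxe : x ≠ e := fun h => hx (h ▸ he)
      show (if x = e then g x - 1 else g x) = 0
      rw [if_neg hxe]
      exact hvan x hx
    · intro x
      show degr (restrG (iotaB H v' e he hv') T') (Sum.inr x) =
        (if x.1 = e then g x.1 - 1 else g x.1) + 1
      have h5 := hdeg' x
      by_cases hxe : x.1 = e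
      · rw [if_pos hxe] at h5 ⊢
        have hge' : 1 ≤ g x.1 := by rw [hxe]; exact hge
        omega
      · rw [if_neg hxe] at h5 ⊢
        omega
    · funext x
      show g x = if x = e then (if x = e then g x - 1 else g x) + 1
        else (if x = e then g x - 1 else g x)
      by_cases hxe : x = e
      · subst hxe
        rw [if_pos rfl, if_pos rfl]
        omega
      · rw [if_neg hxe, if_neg hxe]
  · rintro ⟨f, ⟨T, ⟨hle, htree⟩, hvan, hdeg⟩, rfl⟩
    refine ⟨extG (iotaB H v' e he hv') (wB H v' e he hv') (uB H e he) T,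
      ⟨⟨extB_le H v' e he hv' hle, ext_isTree _ _ _ hinj hni hsurj htree⟩, ?_, ?_⟩⟩
    · intro x hx
      have hxe : x ≠ e := fun h => hx (h ▸ he)
      rw [phiB, if_neg hxe]
      exact hvan x hx
    · intro x
      have h3 : (Sum.inr x : ↥(H.addVertex v' e he hv').V ⊕ ↥(H.addVertex v' e he hv').E)
          = iotaB H v' e he hv' (Sum.inr ⟨x.1, x.2⟩) := rfl
      rw [h3, ext_degr_im _ _ _ hinj hni _ _]
      have hx4 : degr T (Sum.inr ⟨x.1, x.2⟩) = f x.1 + 1 := hdeg ⟨x.1, x.2⟩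
      rw [hx4]
      by_cases hxe : (x : β) = e
      · rw [if_pos (show (Sum.inr ⟨x.1, x.2⟩ : ↥H.V ⊕ ↥H.E) = uB H e he from by
          rw [uB]; exact congrArg Sum.inr (Subtype.ext hxe))]
        rw [phiB, if_pos hxe]
      · rw [if_neg (show (Sum.inr ⟨x.1, x.2⟩ : ↥H.V ⊕ ↥H.E) ≠ uB H e he from by
          rw [uB]; intro h; exact hxe (congrArg Subtype.val (Sum.inr.inj h)))]
        rw [phiB, if_neg hxe]

lemma hyp_phiB_iff (g : β → ℕ) :
    (H.addVertex v' e he hv').IsHypertree (phiB e g) ↔ H.IsHypertree g := by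
  rw [hypB]
  constructor
  · rintro ⟨f, hf, heq⟩
    rwa [phiB_inj e heq]
  · intro h
    exact ⟨g, h, rfl⟩

lemma hypB_pos (g : β → ℕ) (h : (H.addVertex v' e he hv').IsHypertree g) : 1 ≤ g e := by
  obtain ⟨f, hf, rfl⟩ := (hypB H v' e he hv' g).1 h
  show 1 ≤ if e = e then f e + 1 else f e
  rw [if_pos rfl]
  omega

lemma transB (f : β → ℕ) (a b : β) :
    (H.addVertex v' e he hv').TransferPossible (phiB e f) a b ↔ H.TransferPossible f a b := by
  unfold Hypergraph'.TransferPossible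
  by_cases hae : a = e
  · subst hae
    by_cases hfe : f a = 0
    · constructor
      · rintro ⟨-, hyp⟩
        exfalso
        have h1 := hypB_pos H v' a he hv' _ hyp
        have hval : transferFun (phiB a f) a b a = f a := by
          show (if a = a then phiB a f a - 1 else _) = f a
          rw [if_pos rfl]
          show (if a = a then f a + 1 else f a) - 1 = f a
          rw [if_pos rfl]
          omega
        rw [hval] at h1
        omega
      · rintro ⟨hpos, -⟩
        exact absurd hpos (by omega)
    · have key : transferFun (phiB a f) a b = phiB a (transferFun f a b) := by
        funext x
        simp only [transferFun, phiB]
        split_ifs <;> (try subst_vars) <;> first | rfl | omega | tauto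
      rw [key]
      have hpos1 : 0 < phiB a f a := by
        show 0 < if a = a then f a + 1 else f a
        rw [if_pos rfl]
        omega
      rw [hyp_phiB_iff H v' a he hv']
      constructor
      · rintro ⟨-, hyp⟩
        exact ⟨by omega, hyp⟩
      · rintro ⟨-, hyp⟩
        exact ⟨hpos1, hyp⟩
  · have key : transferFun (phiB e f) a b = phiB e (transferFun f a b) := by
      funext x
      simp only [transferFun, phiB]
      split_ifs <;> (try subst_vars) <;> first | rfl | omega | tauto
    rw [key, hyp_phiB_iff H v' e he hv']
    have hval : phiB e f a = f a := by
      show (if a = e then f a + 1 else f a) = f a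
      rw [if_neg hae]
    rw [hval]

lemma intActB (o : LinearOrder β) (f : β → ℕ) (x : β) :
    (H.addVertex v' e he hv').InternallyActive o (phiB e f) x ↔ H.InternallyActive o f x := by
  constructor <;> intro h y hy hlt
  · rw [← transB H v' e he hv']
    exact h y hy hlt
  · rw [transB H v' e he hv']
    exact h y hy hlt

lemma extActB (o : LinearOrder β) (f : β → ℕ) (x : β) :
    (H.addVertex v' e he hv').ExternallyActive o (phiB e f) x ↔ H.ExternallyActive o f x := by
  constructor <;> intro h y hy hlt
  · rw [← transB H v' e he hv']
    exact h y hy hlt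
  · rw [transB H v' e he hv']
    exact h y hy hlt

lemma intInactB (o : LinearOrder β) (f : β → ℕ) :
    (H.addVertex v' e he hv').intInact o (phiB e f) = H.intInact o f := by
  unfold Hypergraph'.intInact
  have hEB : (H.addVertex v' e he hv').E = H.E := rfl
  rw [hEB]
  refine congrArg Finset.card (Finset.filter_congr ?_)
  intro x hx
  rw [not_iff_not]
  exact intActB H v' e he hv' o f x

lemma extInactB (o : LinearOrder β) (f : β → ℕ) :
    (H.addVertex v' e he hv').extInact o (phiB e f) = H.extInact o f := by
  unfold Hypergraph'.extInact
  have hEB : (H.addVertex v' e he hv').E = H.E := rfl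
  rw [hEB]
  refine congrArg Finset.card (Finset.filter_congr ?_)
  intro x hx
  rw [not_iff_not]
  exact extActB H v' e he hv' o f x

end CaseB

/-- adding a singleton hyperedge, or adding a new vertex of valence
one, changes neither the interior nor the exterior polynomial (stated
coefficientwise). -/
theorem add_singleton_add_vertex_invariance (H : Hypergraph' α β)
    (hconn : H.Bip.Connected) (o : LinearOrder β) (k : ℕ) :
    (∀ (b₀ : β) (hb : b₀ ∉ H.E) (v : α) (hv : v ∈ H.V),
      ({f : β → ℕ | (H.addSingleton b₀ v hv hb).IsHypertree f ∧
          (H.addSingleton b₀ v hv hb).intInact o f = k}.ncard =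
        {f : β → ℕ | H.IsHypertree f ∧ H.intInact o f = k}.ncard) ∧
      ({f : β → ℕ | (H.addSingleton b₀ v hv hb).IsHypertree f ∧
          (H.addSingleton b₀ v hv hb).extInact o f = k}.ncard =
        {f : β → ℕ | H.IsHypertree f ∧ H.extInact o f = k}.ncard)) ∧
    (∀ (v' : α) (hv' : v' ∉ H.V) (e : β) (he : e ∈ H.E),
      ({f : β → ℕ | (H.addVertex v' e he hv').IsHypertree f ∧
          (H.addVertex v' e he hv').intInact o f = k}.ncard =
        {f : β → ℕ | H.IsHypertree f ∧ H.intInact o f = k}.ncard) ∧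
      ({f : β → ℕ | (H.addVertex v' e he hv').IsHypertree f ∧
          (H.addVertex v' e he hv').extInact o f = k}.ncard =
        {f : β → ℕ | H.IsHypertree f ∧ H.extInact o f = k}.ncard)) := by
  constructor
  · intro b₀ hb v hv
    constructor
    · have hset : {f : β → ℕ | (H.addSingleton b₀ v hv hb).IsHypertree f ∧
          (H.addSingleton b₀ v hv hb).intInact o f = k} =
          {f : β → ℕ | H.IsHypertree f ∧ H.intInact o f = k} := by
        ext f
        simp only [Set.mem_setOf_eq]
        constructor
        · rintro ⟨h1, h2⟩
          have hH := (hypA H b₀ hb v hv f).1 h1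
          exact ⟨hH, by rw [← intInactA H b₀ hb v hv o f hH]; exact h2⟩
        · rintro ⟨h1, h2⟩
          exact ⟨(hypA H b₀ hb v hv f).2 h1,
            by rw [intInactA H b₀ hb v hv o f h1]; exact h2⟩
      rw [hset]
    · have hset : {f : β → ℕ | (H.addSingleton b₀ v hv hb).IsHypertree f ∧
          (H.addSingleton b₀ v hv hb).extInact o f = k} =
          {f : β → ℕ | H.IsHypertree f ∧ H.extInact o f = k} := by
        ext f
        simp only [Set.mem_setOf_eq]
        constructor
        · rintro ⟨h1, h2⟩
          have hH := (hypA H b₀ hb v hv f).1 h1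
          exact ⟨hH, by rw [← extInactA H b₀ hb v hv o f hH]; exact h2⟩
        · rintro ⟨h1, h2⟩
          exact ⟨(hypA H b₀ hb v hv f).2 h1,
            by rw [extInactA H b₀ hb v hv o f h1]; exact h2⟩
      rw [hset]
  · intro v' hv' e he
    constructor
    · have hset : {f : β → ℕ | (H.addVertex v' e he hv').IsHypertree f ∧
          (H.addVertex v' e he hv').intInact o f = k} =
          phiB e '' {f : β → ℕ | H.IsHypertree f ∧ H.intInact o f = k} := by
        ext g
        simp only [Set.mem_setOf_eq, Set.mem_image]
        constructor
        · rintro ⟨h1, h2⟩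
          obtain ⟨f, hf, rfl⟩ := (hypB H v' e he hv' g).1 h1
          exact ⟨f, ⟨hf, by rw [← intInactB H v' e he hv' o f]; exact h2⟩, rfl⟩
        · rintro ⟨f, ⟨hf, hk⟩, rfl⟩
          exact ⟨(hyp_phiB_iff H v' e he hv' f).2 hf,
            by rw [intInactB H v' e he hv' o f]; exact hk⟩
      rw [hset, Set.ncard_image_of_injective _ (phiB_inj e)]
    · have hset : {f : β → ℕ | (H.addVertex v' e he hv').IsHypertree f ∧
          (H.addVertex v' e he hv').extInact o f = k} =
          phiB e '' {f : β → ℕ | H.IsHypertree f ∧ H.extInact o f = k} := by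
        ext g
        simp only [Set.mem_setOf_eq, Set.mem_image]
        constructor
        · rintro ⟨h1, h2⟩
          obtain ⟨f, hf, rfl⟩ := (hypB H v' e he hv' g).1 h1
          exact ⟨f, ⟨hf, by rw [← extInactB H v' e he hv' o f]; exact h2⟩, rfl⟩
        · rintro ⟨f, ⟨hf, hk⟩, rfl⟩
          exact ⟨(hyp_phiB_iff H v' e he hv' f).2 hf,
            by rw [extInactB H v' e he hv' o f]; exact hk⟩
      rw [hset, Set.ncard_image_of_injective _ (phiB_inj e)]
end
end
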